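/- arXiv:2603.28154 — 2 statements merged into one kernel-verified Lean document; each statement's English description precedes it below -/
import Mathlib

section
/- Let λ_n(a) be defined by the power series expansion (ax;q²)_∞ / (x;q)_∞ = Σ_{n≥0} λ_n(a) x^n. Then λ_n(a) = ((−a)^n q^{n(n−1)} / (q²;q²)_n) · Σ_{k=0}^n ((q^{−n};q)_k (−q^{−n};q)_k / (q;q)_k) (q²/a)^k. -/
open Finset Filter Topology NNReal ENNReal

set_option maxHeartbeats 1000000

noncomputable def qp (x q : ℂ) (n : ℕ) : ℂ := ∏ j ∈ Finset.range n, (1 - x * q ^ j)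

noncomputable def qpinf (x q : ℂ) : ℂ := ∏' j : ℕ, (1 - x * q ^ j)

noncomputable def qbinom (q : ℂ) (n k : ℕ) : ℂ := qp q q n / (qp q q k * qp q q (n - k))

noncomputable def RS (a b q : ℂ) (n : ℕ) : ℂ :=
  ∑ k ∈ Finset.range (n + 1), qbinom q n k * a ^ k * b ^ (n - k)

noncomputable def Tsum (q : ℂ) (r n s : ℕ) : ℂ :=
  ∑ k ∈ Finset.range (n + 1),
    qp (q ^ (-(2 * (n : ℤ)))) (q ^ 2) k / (qp q q k * qp (q ^ ((1 : ℤ) + r - n)) q k)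
      * q ^ ((2 - (s : ℤ)) * k)

noncomputable def gam (q : ℂ) (n : ℕ) : ℂ :=
  ∑ k ∈ Finset.range (n + 1), qbinom q n k * q ^ (k ^ 2) / qp (-q) q k


/-- Euler coefficients for `(y;p)_∞ = ∑ ec p m * y^m`. -/
noncomputable def ec (p : ℂ) (m : ℕ) : ℂ :=
  (-1) ^ m * (∏ i ∈ Finset.range m, p ^ i) / qp p p m

/-- Coefficients for `1/(x;q)_∞ = ∑ dc q j * x^j`. -/
noncomputable def dc (q : ℂ) (j : ℕ) : ℂ := 1 / qp q q j

lemma qp_succ (x q : ℂ) (n : ℕ) : qp x q (n + 1) = qp x q n * (1 - x * q ^ n) :=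
  Finset.prod_range_succ _ n

lemma qp_ne_zero {x q : ℂ} (h : ∀ j, x * q ^ j ≠ 1) (n : ℕ) : qp x q n ≠ 0 := by
  refine Finset.prod_ne_zero_iff.2 fun j _ => ?_
  intro hz
  exact h j (by linear_combination -hz)

lemma qp_self_ne_zero {q : ℂ} (hq : ‖q‖ < 1) (n : ℕ) : qp q q n ≠ 0 := by
  refine qp_ne_zero (fun j hj => ?_) n
  have : ‖q * q ^ j‖ < 1 := by
    rw [norm_mul, norm_pow]
    calc ‖q‖ * ‖q‖ ^ j ≤ ‖q‖ * 1 := by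
          refine mul_le_mul_of_nonneg_left (pow_le_one₀ (norm_nonneg q) hq.le)
            (norm_nonneg q)
      _ < 1 := by simpa using hq
  rw [hj] at this; simp at this

lemma ec_zero (p : ℂ) : ec p 0 = 1 := by simp [ec, qp]

lemma ec_rec {p : ℂ} (hp : ‖p‖ < 1) (m : ℕ) :
    ec p (m + 1) * (1 - p * p ^ m) = -(p ^ m) * ec p m := by
  have h1 : qp p p m ≠ 0 := qp_self_ne_zero hp m
  have h2 : (1 - p * p ^ m) ≠ 0 := by
    have := qp_self_ne_zero hp (m + 1)
    rw [qp_succ] at this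
    exact right_ne_zero_of_mul this
  simp only [ec, qp_succ, Finset.prod_range_succ]
  rw [div_mul_eq_mul_div, mul_div_mul_right _ _ h2]
  ring

lemma summable_ec {p : ℂ} (hp : ‖p‖ < 1) (k : ℕ) {t : ℝ} (ht : 0 ≤ t) :
    Summable fun m => ‖ec p (m + k)‖ * t ^ m := by
  refine summable_of_ratio_norm_eventually_le (r := 1/2) (by norm_num) ?_
  have hppow : Tendsto (fun m : ℕ => ‖p‖ ^ (m + k) * t) atTop (𝓝 0) := by
    have h1 : Tendsto (fun m : ℕ => ‖p‖ ^ (m + k)) atTop (𝓝 0) :=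
      (tendsto_pow_atTop_nhds_zero_of_lt_one (norm_nonneg p) hp).comp
        (tendsto_add_atTop_nat k)
    simpa using h1.mul_const t
  have hev : ∀ᶠ m : ℕ in atTop, ‖p‖ ^ (m + k) * t ≤ (1/2) * (1 - ‖p‖) := by
    refine hppow.eventually_le_const ?_
    have := norm_nonneg p
    nlinarith
  filter_upwards [hev] with m hm
  have h2 : (1 - p * p ^ (m + k)) ≠ 0 := by
    have := qp_self_ne_zero hp (m + k + 1)
    rw [qp_succ] at this
    exact right_ne_zero_of_mul this
  have hrec := ec_rec hp (m + k)
  have heq : ec p (m + 1 + k) = -(p ^ (m + k)) * ec p (m + k) / (1 - p * p ^ (m + k)) := by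
    rw [eq_div_iff h2]
    have : m + 1 + k = (m + k) + 1 := by ring
    rw [this]
    exact ec_rec hp (m + k)
  have hd : (1 : ℝ) - ‖p‖ ≤ ‖1 - p * p ^ (m + k)‖ := by
    have h3 : ‖p * p ^ (m + k)‖ ≤ ‖p‖ := by
      rw [norm_mul, norm_pow]
      calc ‖p‖ * ‖p‖ ^ (m + k) ≤ ‖p‖ * 1 :=
            mul_le_mul_of_nonneg_left (pow_le_one₀ (norm_nonneg p) hp.le) (norm_nonneg p)
        _ = ‖p‖ := by simp
    calc (1 : ℝ) - ‖p‖ ≤ 1 - ‖p * p ^ (m + k)‖ := by linarith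
      _ ≤ ‖1 - p * p ^ (m + k)‖ := by
          have := norm_sub_norm_le (1 : ℂ) (p * p ^ (m + k))
          simpa using this
  have ht' : 0 ≤ t ^ m := pow_nonneg ht m
  have hpa : (0:ℝ) < 1 - ‖p‖ := by
    have := norm_nonneg p; linarith
  rw [Real.norm_eq_abs, Real.norm_eq_abs,
    abs_of_nonneg (mul_nonneg (norm_nonneg _) (pow_nonneg ht _)),
    abs_of_nonneg (mul_nonneg (norm_nonneg _) ht')]
  rw [heq, norm_div, norm_mul, norm_neg, norm_pow]
  have key : ‖p‖ ^ (m + k) / ‖1 - p * p ^ (m + k)‖ * t ≤ 1/2 := by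
    rw [div_mul_eq_mul_div, div_le_iff₀ (lt_of_lt_of_le hpa hd)]
    calc ‖p‖ ^ (m + k) * t ≤ (1/2) * (1 - ‖p‖) := hm
      _ ≤ (1/2) * ‖1 - p * p ^ (m+k)‖ := by
          refine mul_le_mul_of_nonneg_left hd (by norm_num)
  calc ‖p‖ ^ (m + k) * ‖ec p (m + k)‖ / ‖1 - p * p ^ (m + k)‖ * (t ^ (m+1))
      = (‖p‖ ^ (m + k) / ‖1 - p * p ^ (m + k)‖ * t) * (‖ec p (m + k)‖ * t ^ m) := by ring
    _ ≤ (1/2) * (‖ec p (m + k)‖ * t ^ m) := by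
        refine mul_le_mul_of_nonneg_right key (mul_nonneg (norm_nonneg _) ht')

lemma summable_ec_mul {p : ℂ} (hp : ‖p‖ < 1) (y : ℂ) :
    Summable fun m => ‖ec p m * y ^ m‖ := by
  have := summable_ec hp 0 (norm_nonneg y)
  simpa [norm_mul, norm_pow] using this

/-- the Euler series -/
noncomputable def sE (p y : ℂ) : ℂ := ∑' m : ℕ, ec p m * y ^ m

lemma sE_funeq {p : ℂ} (hp : ‖p‖ < 1) (y : ℂ) :
    sE p y = (1 - y) * sE p (p * y) := by
  have hs : ∀ w : ℂ, Summable fun m => ec p m * w ^ m :=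
    fun w => (summable_ec_mul hp w).of_norm
  have hA : Summable fun m => ec p (m + 1) * (p * y) ^ (m + 1) :=
    (_root_.summable_nat_add_iff 1).2 (hs (p * y))
  have hC : Summable fun m => ec p m * (p * y) ^ m * y := (hs (p * y)).mul_right y
  have h1 : sE p (p * y) = 1 + ∑' m : ℕ, ec p (m + 1) * (p * y) ^ (m + 1) := by
    rw [sE, Summable.tsum_eq_zero_add (hs _)]; simp [ec_zero]
  have h2 : ∑' m : ℕ, ec p m * (p * y) ^ m * y = sE p (p * y) * y := by
    rw [sE, _root_.tsum_mul_right]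
  calc sE p y = 1 + ∑' m : ℕ, ec p (m + 1) * y ^ (m + 1) := by
        rw [sE, Summable.tsum_eq_zero_add (hs y)]; simp [ec_zero]
    _ = 1 + ∑' m : ℕ, (ec p (m + 1) * (p * y) ^ (m + 1) - ec p m * (p * y) ^ m * y) := by
        congr 1
        refine tsum_congr fun m => ?_
        have hrec := ec_rec hp m
        linear_combination (y ^ (m + 1)) * hrec
    _ = 1 + ((∑' m : ℕ, ec p (m + 1) * (p * y) ^ (m + 1)) -
          ∑' m : ℕ, ec p m * (p * y) ^ m * y) := by rw [Summable.tsum_sub hA hC]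
    _ = (1 - y) * sE p (p * y) := by
        rw [h2]
        have h1' : (∑' m : ℕ, ec p (m + 1) * (p * y) ^ (m + 1)) = sE p (p * y) - 1 := by
          rw [h1]; ring
        rw [h1']; ring

lemma sE_prod {p : ℂ} (hp : ‖p‖ < 1) (y : ℂ) (N : ℕ) :
    sE p y = qp y p N * sE p (p ^ N * y) := by
  induction N with
  | zero => simp [qp]
  | succ N ih =>
    rw [ih, sE_funeq hp (p ^ N * y), qp_succ]
    have : p * (p ^ N * y) = p ^ (N + 1) * y := by ring
    rw [this]
    ring

/-- generic continuity-at-zero lemma -/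
lemma norm_tsum_sub_one_le (c : ℕ → ℂ) (h0 : c 0 = 1) {z y : ℂ} (hzy : ‖z‖ ≤ ‖y‖)
    (hC : Summable fun m => ‖c (m + 1)‖ * ‖y‖ ^ m) :
    ‖(∑' m : ℕ, c m * z ^ m) - 1‖ ≤ ‖z‖ * ∑' m : ℕ, ‖c (m + 1)‖ * ‖y‖ ^ m := by
  have hnorm : Summable fun m => ‖c (m + 1) * z ^ m‖ := by
    refine Summable.of_nonneg_of_le (fun m => norm_nonneg _) (fun m => ?_) hC
    rw [norm_mul, norm_pow]
    exact mul_le_mul_of_nonneg_left (pow_le_pow_left₀ (norm_nonneg z) hzy m) (norm_nonneg _)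
  have hshift : Summable fun m => c (m + 1) * z ^ m := hnorm.of_norm
  have hsum : Summable fun m => c m * z ^ m := by
    refine (_root_.summable_nat_add_iff 1).1 ?_
    have := hshift.mul_right z
    refine this.congr fun m => ?_
    ring
  rw [Summable.tsum_eq_zero_add hsum, h0]
  have hre : ∑' m : ℕ, c (m + 1) * z ^ (m + 1) = z * ∑' m : ℕ, c (m + 1) * z ^ m := by
    rw [← _root_.tsum_mul_left]
    exact tsum_congr fun m => by ring
  rw [pow_zero, mul_one, add_sub_cancel_left, hre, norm_mul]
  refine mul_le_mul_of_nonneg_left ?_ (norm_nonneg z)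
  refine le_trans (norm_tsum_le_tsum_norm hnorm) ?_
  refine Summable.tsum_le_tsum (fun m => ?_) hnorm hC
  rw [norm_mul, norm_pow]
  exact mul_le_mul_of_nonneg_left (pow_le_pow_left₀ (norm_nonneg z) hzy m) (norm_nonneg _)

lemma tendsto_series_one (c : ℕ → ℂ) (h0 : c 0 = 1) (y : ℂ) (z : ℕ → ℂ)
    (hzle : ∀ N, ‖z N‖ ≤ ‖y‖) (hz0 : Tendsto z atTop (𝓝 0))
    (hC : Summable fun m => ‖c (m + 1)‖ * ‖y‖ ^ m) :
    Tendsto (fun N => ∑' m : ℕ, c m * z N ^ m) atTop (𝓝 1) := by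
  have hb : ∀ N, ‖(∑' m : ℕ, c m * z N ^ m) - 1‖ ≤
      ‖z N‖ * ∑' m : ℕ, ‖c (m + 1)‖ * ‖y‖ ^ m :=
    fun N => norm_tsum_sub_one_le c h0 (hzle N) hC
  have h0' : Tendsto (fun N => ‖z N‖ * ∑' m : ℕ, ‖c (m + 1)‖ * ‖y‖ ^ m) atTop (𝓝 0) := by
    have := (hz0.norm).mul_const (∑' m : ℕ, ‖c (m + 1)‖ * ‖y‖ ^ m)
    simpa using this
  have hT : Tendsto (fun N => (∑' m : ℕ, c m * z N ^ m) - 1) atTop (𝓝 0) :=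
    squeeze_zero_norm hb h0'
  have := hT.add_const 1
  simpa using this

lemma summable_log {p : ℂ} (hp : ‖p‖ < 1) (y : ℂ) :
    Summable fun j : ℕ => Complex.log (1 - y * p ^ j) := by
  have hgeo : Summable fun j : ℕ => (3/2 : ℝ) * (‖y‖ * ‖p‖ ^ j) :=
    (((summable_geometric_of_lt_one (norm_nonneg p) hp).mul_left
      (‖y‖)).mul_left _)
  refine Summable.of_norm_bounded_eventually_nat hgeo ?_
  have h0 : Tendsto (fun j : ℕ => ‖y‖ * ‖p‖ ^ j) atTop (𝓝 0) := by
    have := (tendsto_pow_atTop_nhds_zero_of_lt_one (norm_nonneg p) hp).const_mul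
      (‖y‖)
    simpa using this
  have hev : ∀ᶠ j : ℕ in atTop, ‖y‖ * ‖p‖ ^ j ≤ 1/2 :=
    h0.eventually_le_const (by norm_num)
  filter_upwards [hev] with j hj
  have hz : ‖-(y * p ^ j)‖ ≤ 1/2 := by
    rw [norm_neg, norm_mul, norm_pow]
    exact hj
  have := Complex.norm_log_one_add_half_le_self hz
  rw [show (1 : ℂ) + -(y * p ^ j) = 1 - y * p ^ j by ring] at this
  refine le_trans this ?_
  rw [norm_neg, norm_mul, norm_pow]

lemma hasProd_qp {p : ℂ} (hp : ‖p‖ < 1) (y : ℂ) :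
    HasProd (fun j : ℕ => 1 - y * p ^ j) (sE p y) := by
  by_cases hzero : ∃ j : ℕ, y * p ^ j = 1
  · obtain ⟨j₀, hj₀⟩ := hzero
    have hs0 : sE p y = 0 := by
      rw [sE_prod hp y (j₀ + 1)]
      have hq0 : qp y p (j₀ + 1) = 0 :=
        Finset.prod_eq_zero (Finset.self_mem_range_succ j₀) (by rw [hj₀, sub_self])
      rw [hq0, zero_mul]
    rw [hs0]
    have hev : ∀ᶠ S : Finset ℕ in atTop, (0 : ℂ) = ∏ j ∈ S, (1 - y * p ^ j) := by
      filter_upwards [eventually_ge_atTop ({j₀} : Finset ℕ)] with S hS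
      exact (Finset.prod_eq_zero (Finset.singleton_subset_iff.mp hS) (by rw [hj₀, sub_self])).symm
    exact Tendsto.congr' hev tendsto_const_nhds
  · push_neg at hzero
    have hfn : ∀ j : ℕ, (1 : ℂ) - y * p ^ j ≠ 0 := fun j =>
      sub_ne_zero.2 fun h => hzero j h.symm
    have hm : Multipliable (fun j : ℕ => 1 - y * p ^ j) :=
      Complex.multipliable_of_summable_log (summable_log hp y)
    have ht1 : Tendsto (fun N => ∏ j ∈ Finset.range N, (1 - y * p ^ j)) atTop
        (𝓝 (∏' j : ℕ, (1 - y * p ^ j))) := hm.hasProd.tendsto_prod_nat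
    have hz0 : Tendsto (fun N : ℕ => p ^ N * y) atTop (𝓝 0) := by
      have h1 : Tendsto (fun N : ℕ => p ^ N) atTop (𝓝 0) := by
        refine tendsto_pow_atTop_nhds_zero_of_norm_lt_one ?_
        exact hp
      have := h1.mul_const y
      simpa using this
    have hzle : ∀ N : ℕ, ‖p ^ N * y‖ ≤ ‖y‖ := by
      intro N
      rw [norm_mul, norm_pow]
      calc ‖p‖ ^ N * ‖y‖ ≤ 1 * ‖y‖ :=
            mul_le_mul_of_nonneg_right (pow_le_one₀ (norm_nonneg p) hp.le) (norm_nonneg y)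
        _ = ‖y‖ := one_mul _
    have hC : Summable fun m => ‖ec p (m + 1)‖ * ‖y‖ ^ m := summable_ec hp 1 (norm_nonneg y)
    have hS : Tendsto (fun N => sE p (p ^ N * y)) atTop (𝓝 1) :=
      tendsto_series_one (ec p) (ec_zero p) y (fun N => p ^ N * y) hzle hz0 hC
    have hmain : Tendsto (fun N => qp y p N * sE p (p ^ N * y)) atTop
        (𝓝 ((∏' j : ℕ, (1 - y * p ^ j)) * 1)) := ht1.mul hS
    have hconst : (fun N => qp y p N * sE p (p ^ N * y)) = fun _ => sE p y :=
      funext fun N => (sE_prod hp y N).symm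
    rw [hconst] at hmain
    have heq : (∏' j : ℕ, (1 - y * p ^ j)) * 1 = sE p y :=
      tendsto_nhds_unique hmain (tendsto_const_nhds (f := atTop (α := ℕ)))
    rw [mul_one] at heq
    exact heq ▸ hm.hasProd

lemma qpinf_eq_sE {p : ℂ} (hp : ‖p‖ < 1) (y : ℂ) : qpinf y p = sE p y :=
  (hasProd_qp hp y).tprod_eq

lemma qpinf_ne_zero {x q : ℂ} (hq : ‖q‖ < 1) (h : ∀ j, x * q ^ j ≠ 1) :
    qpinf x q ≠ 0 := by
  have hfn : ∀ j : ℕ, (1 : ℂ) - x * q ^ j ≠ 0 := fun j =>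
    sub_ne_zero.2 fun hh => h j hh.symm
  have := Complex.cexp_tsum_eq_tprod (f := fun j => 1 - x * q ^ j) hfn (summable_log hq x)
  have h2 := this
  rw [qpinf, ← h2]
  exact Complex.exp_ne_zero _

lemma dc_zero (q : ℂ) : dc q 0 = 1 := by simp [dc, qp]

lemma dc_rec {q : ℂ} (hq : ‖q‖ < 1) (j : ℕ) :
    dc q (j + 1) * (1 - q * q ^ j) = dc q j := by
  have h1 : qp q q j ≠ 0 := qp_self_ne_zero hq j
  have h2 : (1 - q * q ^ j) ≠ 0 := by
    have := qp_self_ne_zero hq (j + 1)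
    rw [qp_succ] at this
    exact right_ne_zero_of_mul this
  simp only [dc, qp_succ]
  field_simp

lemma qp_self_norm_lower {q : ℂ} (hq : ‖q‖ < 1) :
    ∃ δ : ℝ, 0 < δ ∧ ∀ N, δ ≤ ‖qp q q N‖ := by
  have habs : ∀ j : ℕ, q * q ^ j ≠ 1 := by
    intro j hj
    have : ‖q * q ^ j‖ < 1 := by
      rw [norm_mul, norm_pow]
      calc ‖q‖ * ‖q‖ ^ j ≤ ‖q‖ * 1 :=
            mul_le_mul_of_nonneg_left (pow_le_one₀ (norm_nonneg q) hq.le)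
              (norm_nonneg q)
        _ < 1 := by simpa using hq
    rw [hj] at this; simp at this
  have hL : qpinf q q ≠ 0 := qpinf_ne_zero hq habs
  have hT : Tendsto (fun N => qp q q N) atTop (𝓝 (qpinf q q)) := by
    have := (hasProd_qp hq q).tendsto_prod_nat
    rw [← qpinf_eq_sE hq q] at this
    exact this
  have hev : ∀ᶠ N : ℕ in atTop, ‖qpinf q q‖ / 2 ≤ ‖qp q q N‖ := by
    have hn : Tendsto (fun N => ‖qp q q N‖) atTop (𝓝 ‖qpinf q q‖) := hT.norm
    have hlt : ‖qpinf q q‖ / 2 < ‖qpinf q q‖ := by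
      have : 0 < ‖qpinf q q‖ := norm_pos_iff.2 hL
      linarith
    exact hn.eventually_const_le hlt
  obtain ⟨N₀, hN₀⟩ := eventually_atTop.1 hev
  classical
  let F : Finset ℝ := (Finset.range (N₀ + 1)).image (fun i => ‖qp q q i‖)
  have hFne : F.Nonempty := by
    refine Finset.Nonempty.image ?_ _
    exact Finset.nonempty_range_add_one
  refine ⟨min (‖qpinf q q‖ / 2) (F.min' hFne), ?_, ?_⟩
  · refine lt_min ?_ ?_
    · have : 0 < ‖qpinf q q‖ := norm_pos_iff.2 hL
      linarith
    · obtain ⟨w, hw, hweq⟩ := Finset.mem_image.1 (F.min'_mem hFne)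
      rw [← hweq]
      exact norm_pos_iff.2 (qp_self_ne_zero hq w)
  · intro N
    rcases le_or_gt N₀ N with h | h
    · exact le_trans (min_le_left _ _) (hN₀ N h)
    · refine le_trans (min_le_right _ _) ?_
      refine Finset.min'_le _ _ ?_
      exact Finset.mem_image.2 ⟨N, Finset.mem_range.2 (by omega), rfl⟩

lemma summable_dc {q : ℂ} (hq : ‖q‖ < 1) (k : ℕ) {t : ℝ} (ht0 : 0 ≤ t)
    (ht : t < 1) : Summable fun j => ‖dc q (j + k)‖ * t ^ j := by
  obtain ⟨δ, hδ, hbound⟩ := qp_self_norm_lower hq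
  have hgeo : Summable fun j : ℕ => (1/δ) * t ^ j :=
    (summable_geometric_of_lt_one ht0 ht).mul_left _
  refine Summable.of_nonneg_of_le (fun j => mul_nonneg (norm_nonneg _) (pow_nonneg ht0 j))
    (fun j => ?_) hgeo
  refine mul_le_mul_of_nonneg_right ?_ (pow_nonneg ht0 j)
  rw [dc, norm_div, norm_one]
  rw [div_le_div_iff₀ (norm_pos_iff.2 (qp_self_ne_zero hq _)) hδ]
  have := hbound (j + k)
  linarith [hbound (j + k), mul_le_mul_of_nonneg_left (hbound (j+k)) (le_of_lt hδ)]

lemma summable_dc_mul {q : ℂ} (hq : ‖q‖ < 1) {x : ℂ} (hx : ‖x‖ < 1) :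
    Summable fun j => ‖dc q j * x ^ j‖ := by
  have hx' : ‖x‖ < 1 := hx
  have := summable_dc hq 0 (norm_nonneg x) hx'
  simpa [norm_mul, norm_pow] using this

lemma tS_funeq {q : ℂ} (hq : ‖q‖ < 1) {x : ℂ} (hx : ‖x‖ < 1) :
    (∑' j : ℕ, dc q j * (q * x) ^ j) = (1 - x) * ∑' j : ℕ, dc q j * x ^ j := by
  have hqx : ‖q * x‖ < 1 := by
    rw [norm_mul]
    calc ‖q‖ * ‖x‖ ≤ 1 * ‖x‖ :=
          mul_le_mul_of_nonneg_right hq.le (norm_nonneg x)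
      _ = ‖x‖ := one_mul _
      _ < 1 := hx
  have hsx : Summable fun j => dc q j * x ^ j := (summable_dc_mul hq hx).of_norm
  have hsqx : Summable fun j => dc q j * (q * x) ^ j := (summable_dc_mul hq hqx).of_norm
  have hA : Summable fun j => dc q (j + 1) * x ^ (j + 1) := (_root_.summable_nat_add_iff 1).2 hsx
  have hC : Summable fun j => dc q j * x ^ j * x := hsx.mul_right x
  calc (∑' j : ℕ, dc q j * (q * x) ^ j)
      = 1 + ∑' j : ℕ, dc q (j + 1) * (q * x) ^ (j + 1) := by
        rw [Summable.tsum_eq_zero_add hsqx]; simp [dc_zero]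
    _ = 1 + ∑' j : ℕ, (dc q (j + 1) * x ^ (j + 1) - dc q j * x ^ j * x) := by
        congr 1
        refine tsum_congr fun j => ?_
        have hrec := dc_rec hq j
        linear_combination (-(x ^ (j + 1))) * hrec
    _ = 1 + ((∑' j : ℕ, dc q (j + 1) * x ^ (j + 1)) - ∑' j : ℕ, dc q j * x ^ j * x) := by
        rw [Summable.tsum_sub hA hC]
    _ = (1 - x) * ∑' j : ℕ, dc q j * x ^ j := by
        have h1 : (∑' j : ℕ, dc q (j + 1) * x ^ (j + 1)) = (∑' j : ℕ, dc q j * x ^ j) - 1 := by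
          rw [Summable.tsum_eq_zero_add hsx]; simp [dc_zero]
        have h2 : ∑' j : ℕ, dc q j * x ^ j * x = (∑' j : ℕ, dc q j * x ^ j) * x :=
          _root_.tsum_mul_right
        rw [h1, h2]; ring

lemma abs_pow_mul_lt {q x : ℂ} (hq : ‖q‖ < 1) (hx : ‖x‖ < 1) (N : ℕ) :
    ‖q ^ N * x‖ < 1 := by
  rw [norm_mul, norm_pow]
  calc ‖q‖ ^ N * ‖x‖ ≤ 1 * ‖x‖ :=
        mul_le_mul_of_nonneg_right (pow_le_one₀ (norm_nonneg q) hq.le)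
          (norm_nonneg x)
    _ = ‖x‖ := one_mul _
    _ < 1 := hx

lemma tS_prod {q : ℂ} (hq : ‖q‖ < 1) {x : ℂ} (hx : ‖x‖ < 1) (N : ℕ) :
    (∑' j : ℕ, dc q j * (q ^ N * x) ^ j) = qp x q N * ∑' j : ℕ, dc q j * x ^ j := by
  induction N with
  | zero => simp [qp]
  | succ N ih =>
    have h1 : (q ^ (N + 1) * x) = q * (q ^ N * x) := by ring
    rw [h1, tS_funeq hq (abs_pow_mul_lt hq hx N), ih, qp_succ]
    ring

lemma qpinf_mul_tS {q : ℂ} (hq : ‖q‖ < 1) {x : ℂ} (hx : ‖x‖ < 1) :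
    qpinf x q * (∑' j : ℕ, dc q j * x ^ j) = 1 := by
  have hT : Tendsto (fun N => qp x q N) atTop (𝓝 (qpinf x q)) := by
    have := (hasProd_qp hq x).tendsto_prod_nat
    rw [← qpinf_eq_sE hq x] at this
    exact this
  have hmul : Tendsto (fun N => qp x q N * ∑' j : ℕ, dc q j * x ^ j) atTop
      (𝓝 (qpinf x q * ∑' j : ℕ, dc q j * x ^ j)) :=
    hT.mul_const _
  have hzle : ∀ N : ℕ, ‖q ^ N * x‖ ≤ ‖x‖ := by
    intro N
    rw [norm_mul, norm_pow]
    calc ‖q‖ ^ N * ‖x‖ ≤ 1 * ‖x‖ :=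
          mul_le_mul_of_nonneg_right (pow_le_one₀ (norm_nonneg q) hq.le) (norm_nonneg x)
      _ = ‖x‖ := one_mul _
  have hz0 : Tendsto (fun N : ℕ => q ^ N * x) atTop (𝓝 0) := by
    have h1 : Tendsto (fun N : ℕ => q ^ N) atTop (𝓝 0) :=
      tendsto_pow_atTop_nhds_zero_of_norm_lt_one hq
    simpa using h1.mul_const x
  have hC : Summable fun m => ‖dc q (m + 1)‖ * ‖x‖ ^ m :=
    summable_dc hq 1 (norm_nonneg x) hx
  have hS : Tendsto (fun N => ∑' j : ℕ, dc q j * (q ^ N * x) ^ j) atTop (𝓝 1) :=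
    tendsto_series_one (dc q) (dc_zero q) x (fun N => q ^ N * x) hzle hz0 hC
  have heq : (fun N => ∑' j : ℕ, dc q j * (q ^ N * x) ^ j) =
      fun N => qp x q N * ∑' j : ℕ, dc q j * x ^ j :=
    funext fun N => tS_prod hq hx N
  rw [heq] at hS
  exact tendsto_nhds_unique hmul hS

/-- The Cauchy product coefficients. -/
noncomputable def mu (q a : ℂ) (n : ℕ) : ℂ :=
  ∑ k ∈ Finset.range (n + 1), ec (q ^ 2) k * a ^ k * dc q (n - k)

lemma abs_sq_lt {q : ℂ} (hq : ‖q‖ < 1) : ‖q ^ 2‖ < 1 := by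
  rw [norm_pow]
  exact pow_lt_one₀ (norm_nonneg q) hq (by norm_num)

lemma abs_mul_pow_lt {x q : ℂ} (hx : ‖x‖ < 1) (hq : ‖q‖ < 1) (j : ℕ) :
    x * q ^ j ≠ 1 := by
  intro hj
  have : ‖x * q ^ j‖ < 1 := by
    rw [norm_mul, norm_pow]
    calc ‖x‖ * ‖q‖ ^ j ≤ ‖x‖ * 1 :=
          mul_le_mul_of_nonneg_left (pow_le_one₀ (norm_nonneg q) hq.le)
            (norm_nonneg x)
      _ < 1 := by simpa using hx
  rw [hj] at this; simp at this

lemma summable_f_norm {q : ℂ} (hq : ‖q‖ < 1) (a x : ℂ) :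
    Summable fun k => ‖ec (q ^ 2) k * a ^ k * x ^ k‖ :=
  (summable_ec_mul (abs_sq_lt hq) (a * x)).congr fun k =>
    congrArg Norm.norm (by ring)

lemma mu_sum_eq (q a x : ℂ) (n : ℕ) :
    (∑ k ∈ Finset.range (n + 1), (ec (q ^ 2) k * a ^ k * x ^ k) * (dc q (n - k) * x ^ (n - k)))
      = mu q a n * x ^ n := by
  rw [mu, Finset.sum_mul]
  refine Finset.sum_congr rfl fun k hk => ?_
  have hk' : k ≤ n := Finset.mem_range_succ_iff.mp hk
  rw [show (ec (q ^ 2) k * a ^ k * x ^ k) * (dc q (n - k) * x ^ (n - k)) =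
    ec (q ^ 2) k * a ^ k * dc q (n - k) * (x ^ k * x ^ (n - k)) from by ring,
    ← pow_add, show k + (n - k) = n from by omega]

lemma summable_mu_norm {q : ℂ} (hq : ‖q‖ < 1) (a : ℂ) {x : ℂ}
    (hx : ‖x‖ < 1) : Summable fun n => ‖mu q a n * x ^ n‖ :=
  (summable_norm_sum_mul_range_of_summable_norm (summable_f_norm hq a x)
    (summable_dc_mul hq hx)).congr fun n => congrArg Norm.norm (mu_sum_eq q a x n)

lemma cauchy_expand {q : ℂ} (hq : ‖q‖ < 1) (a : ℂ) {x : ℂ}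
    (hx : ‖x‖ < 1) :
    qpinf (a * x) (q ^ 2) / qpinf x q = ∑' n : ℕ, mu q a n * x ^ n := by
  have hq2 := abs_sq_lt hq
  have hnum : qpinf (a * x) (q ^ 2) = ∑' k : ℕ, ec (q ^ 2) k * a ^ k * x ^ k := by
    rw [qpinf_eq_sE hq2 (a * x), sE]
    exact tsum_congr fun k => by ring
  have hden_ne : qpinf x q ≠ 0 := qpinf_ne_zero hq (abs_mul_pow_lt hx hq)
  have htS := qpinf_mul_tS hq hx
  have hdiv : qpinf (a * x) (q ^ 2) / qpinf x q =
      qpinf (a * x) (q ^ 2) * ∑' j : ℕ, dc q j * x ^ j := by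
    rw [div_eq_iff hden_ne, mul_assoc, mul_comm (∑' j : ℕ, dc q j * x ^ j) (qpinf x q), htS,
      mul_one]
  rw [hdiv, hnum,
    tsum_mul_tsum_eq_tsum_sum_range_of_summable_norm (summable_f_norm hq a x)
      (summable_dc_mul hq hx)]
  exact tsum_congr fun n => mu_sum_eq q a x n

lemma lam_eq_mu {q a : ℂ} (hq : ‖q‖ < 1) (lam : ℕ → ℂ)
    (hlam : ∀ x : ℂ, ‖x‖ < 1 →
      qpinf (a * x) (q ^ 2) / qpinf x q = ∑' n : ℕ, lam n * x ^ n) :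
    lam = mu q a := by
  have hK : ∀ x : ℂ, ‖x‖ < 1 →
      (∑' n : ℕ, lam n * x ^ n) = ∑' n : ℕ, mu q a n * x ^ n := fun x hx => by
    rw [← hlam x hx, cauchy_expand hq a hx]
  have hmu0 : mu q a 0 = 1 := by simp [mu, ec_zero, dc_zero]
  have hnorm12 : ‖((1:ℂ)/2)‖ = 1/2 := by simp
  have habs12 : ‖((1:ℂ)/2)‖ < 1 := by
    rw [show ‖((1:ℂ)/2)‖ = ‖((1:ℂ)/2)‖ from rfl, hnorm12]; norm_num
  have hs12 : Summable fun n => ‖mu q a n‖ * (1/2 : ℝ) ^ n := by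
    refine (summable_mu_norm hq a habs12).congr fun n => ?_
    rw [norm_mul, norm_pow, hnorm12]
  have hC' : Summable fun m => ‖mu q a (m + 1)‖ * ‖((1:ℂ)/2)‖ ^ m := by
    have h1 : Summable fun m => ‖mu q a (m + 1)‖ * (1/2 : ℝ) ^ (m + 1) :=
      (_root_.summable_nat_add_iff 1).2 hs12
    refine ((h1.mul_right 2).congr fun m => ?_)
    rw [hnorm12, pow_succ]; ring
  set C : ℝ := ∑' m : ℕ, ‖mu q a (m + 1)‖ * ‖((1:ℂ)/2)‖ ^ m with hCdef
  have hC0 : 0 ≤ C := tsum_nonneg fun m =>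
    mul_nonneg (norm_nonneg _) (pow_nonneg (norm_nonneg _) m)
  set ε : ℝ := min (1/2) (1/(2*(C+1))) with hεdef
  have hεpos : 0 < ε := lt_min (by norm_num) (by positivity)
  have hεle : ε ≤ 1/2 := min_le_left _ _
  have hgne : ∀ z : ℂ, ‖z‖ < ε → (∑' n : ℕ, mu q a n * z ^ n) ≠ 0 := by
    intro z hz h0
    have hz12 : ‖z‖ ≤ ‖((1:ℂ)/2)‖ := by rw [hnorm12]; linarith
    have hb := norm_tsum_sub_one_le (mu q a) hmu0 hz12 hC'
    rw [h0] at hb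
    simp only [zero_sub, norm_neg, norm_one] at hb
    have h2 : ‖z‖ * C < 1 := by
      have hzlt : ‖z‖ < 1/(2*(C+1)) := lt_of_lt_of_le hz (min_le_right _ _)
      have : ‖z‖ * C ≤ ‖z‖ * (C + 1) := by nlinarith [norm_nonneg z]
      have h3 : ‖z‖ * (C + 1) < (1/(2*(C+1))) * (C + 1) := by
        refine mul_lt_mul_of_pos_right hzlt (by linarith)
      have h4 : (1/(2*(C+1))) * (C + 1) = 1/2 := by field_simp
      linarith
    linarith
  have hεlt1 : ε < 1 := lt_of_le_of_lt hεle (by norm_num)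
  have hlamsum : ∀ z : ℂ, ‖z‖ < ε → Summable fun n => lam n * z ^ n := by
    intro z hz
    by_contra hns
    have h0 : (∑' n : ℕ, lam n * z ^ n) = 0 := tsum_eq_zero_of_not_summable hns
    have habs : ‖z‖ < 1 := lt_of_lt_of_le (lt_of_lt_of_le hz hεle) (by norm_num)
    exact hgne z hz ((hK z habs) ▸ h0)
  set x₀ : ℂ := ((ε/2 : ℝ) : ℂ) with hx₀def
  have hx₀ : ‖x₀‖ = ε/2 := by
    rw [hx₀def, Complex.norm_real, Real.norm_eq_abs, abs_of_pos (by linarith)]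
  have hsum₀ : Summable fun n => lam n * x₀ ^ n := hlamsum x₀ (by rw [hx₀]; linarith)
  have hnorm₀ : Summable fun n => ‖lam n‖ * (ε/2) ^ n := by
    refine (summable_norm_iff.mpr hsum₀).congr fun n => ?_
    rw [norm_mul, norm_pow, hx₀]
  set P := FormalMultilinearSeries.ofScalars ℂ lam with hPdef
  set Q := FormalMultilinearSeries.ofScalars ℂ (mu q a) with hQdef
  have hrP : 0 < P.radius := by
    have h1 : (((ε/2).toNNReal : ℝ≥0) : ℝ≥0∞) ≤ P.radius := by
      apply FormalMultilinearSeries.le_radius_of_summable_norm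
      refine hnorm₀.congr fun n => ?_
      rw [hPdef, FormalMultilinearSeries.ofScalars_norm,
        Real.coe_toNNReal _ (le_of_lt (by linarith))]
    exact lt_of_lt_of_le (ENNReal.coe_pos.2 (Real.toNNReal_pos.2 (by linarith))) h1
  have hrQ : 0 < Q.radius := by
    have h1 : ((Real.toNNReal (1/2) : ℝ≥0) : ℝ≥0∞) ≤ Q.radius := by
      apply FormalMultilinearSeries.le_radius_of_summable_norm
      refine hs12.congr fun n => ?_
      rw [hQdef, FormalMultilinearSeries.ofScalars_norm,
        Real.coe_toNNReal _ (by norm_num : (0:ℝ) ≤ 1/2)]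
    exact lt_of_lt_of_le (ENNReal.coe_pos.2 (Real.toNNReal_pos.2 (by norm_num))) h1
  have hPb : HasFPowerSeriesAt P.sum P 0 := (P.hasFPowerSeriesOnBall hrP).hasFPowerSeriesAt
  have hQb : HasFPowerSeriesAt Q.sum Q 0 := (Q.hasFPowerSeriesOnBall hrQ).hasFPowerSeriesAt
  have hPsum : ∀ z : ℂ, P.sum z = ∑' n : ℕ, lam n * z ^ n := fun z => by
    simp only [hPdef, FormalMultilinearSeries.sum]
    exact tsum_congr fun n => by
      rw [FormalMultilinearSeries.ofScalars_apply_eq, smul_eq_mul]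
  have hQsum : ∀ z : ℂ, Q.sum z = ∑' n : ℕ, mu q a n * z ^ n := fun z => by
    simp only [hQdef, FormalMultilinearSeries.sum]
    exact tsum_congr fun n => by
      rw [FormalMultilinearSeries.ofScalars_apply_eq, smul_eq_mul]
  have hfeq : P.sum =ᶠ[𝓝 (0:ℂ)] Q.sum := by
    filter_upwards [Metric.ball_mem_nhds (0:ℂ) hεpos] with z hz
    rw [mem_ball_zero_iff] at hz
    rw [hPsum, hQsum]
    exact hK z (lt_of_lt_of_le (lt_of_lt_of_le hz hεle) (by norm_num))
  have hPQ : P = Q := hPb.eq_formalMultilinearSeries (hQb.congr hfeq.symm)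
  exact (FormalMultilinearSeries.ofScalars_series_eq_iff ℂ lam (mu q a)).1 hPQ

lemma prod_q2 (q : ℂ) (m : ℕ) : (∏ i ∈ Finset.range m, ((q ^ 2) ^ i)) = q ^ (m * (m - 1)) := by
  rw [Finset.prod_pow_eq_pow_sum, ← pow_mul]
  congr 1
  have := Finset.sum_range_id_mul_two m
  omega

lemma qp_split (w : ℂ) (m k : ℕ) :
    qp w w (m + k) = qp w w m * ∏ j ∈ Finset.range k, (1 - w ^ (m + k - j)) := by
  rw [qp, Finset.prod_range_add]
  congr 1
  calc (∏ j ∈ Finset.range k, (1 - w * w ^ (m + j)))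
      = ∏ j ∈ Finset.range k, (1 - w * w ^ (m + (k - 1 - j))) :=
        (Finset.prod_range_reflect (fun j => 1 - w * w ^ (m + j)) k).symm
    _ = ∏ j ∈ Finset.range k, (1 - w ^ (m + k - j)) := by
        refine Finset.prod_congr rfl fun j hj => ?_
        have hj' : j < k := Finset.mem_range.mp hj
        rw [← pow_succ']
        congr 2
        omega

lemma cast_mul_pred (n : ℕ) : ((n * (n - 1) : ℕ) : ℤ) = (n : ℤ) * n - n := by
  cases n with
  | zero => simp
  | succ n => push_cast [Nat.succ_sub_one]; ring

lemma term_eq {q a : ℂ} (hq0 : q ≠ 0) (hq : ‖q‖ < 1) (ha : a ≠ 0)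
    (m k : ℕ) :
    (-a) ^ (m + k) * q ^ ((m + k) * (m + k - 1)) / qp (q ^ 2) (q ^ 2) (m + k) *
      (qp (q ^ (-((m + k : ℕ) : ℤ))) q k * qp (-(q ^ (-((m + k : ℕ) : ℤ)))) q k / qp q q k *
        (q ^ 2 / a) ^ k)
      = ec (q ^ 2) m * a ^ m * dc q k := by
  have hq2 : ‖q ^ 2‖ < 1 := abs_sq_lt hq
  set u : ℂ := q ^ (-((m + k : ℕ) : ℤ)) with hu
  have hX : qp (q ^ 2) (q ^ 2) (m + k) ≠ 0 := qp_self_ne_zero hq2 _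
  have hY : qp (q ^ 2) (q ^ 2) m ≠ 0 := qp_self_ne_zero hq2 m
  have hZ : qp q q k ≠ 0 := qp_self_ne_zero hq k
  -- u^2 * (q^2)^(m+k) = 1
  have huq : u ^ 2 * (q ^ 2) ^ (m + k) = 1 := by
    rw [hu]
    rw [← zpow_natCast (q ^ (-((m + k : ℕ) : ℤ))) 2, ← zpow_mul,
      ← zpow_natCast (q ^ 2) (m + k), ← zpow_natCast q 2, ← zpow_mul, ← zpow_add₀ hq0]
    norm_num
    have h0 : (-(k:ℤ) + -(m:ℤ)) * 2 + 2 * ((m:ℤ) + (k:ℤ)) = 0 := by ring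
    rw [h0, zpow_zero]
  -- step A+B: the double qp product
  have key : qp u q k * qp (-u) q k
      = (-1) ^ k * (u ^ 2) ^ k * q ^ (k * (k - 1)) *
        (qp (q ^ 2) (q ^ 2) (m + k) / qp (q ^ 2) (q ^ 2) m) := by
    have h1 : qp u q k * qp (-u) q k = ∏ j ∈ Finset.range k, (1 - u ^ 2 * (q ^ 2) ^ j) := by
      rw [qp, qp, ← Finset.prod_mul_distrib]
      exact Finset.prod_congr rfl fun j _ => by ring
    have h2 : ∀ j ∈ Finset.range k,
        (1 : ℂ) - u ^ 2 * (q ^ 2) ^ j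
          = (-(u ^ 2 * (q ^ 2) ^ j)) * (1 - (q ^ 2) ^ (m + k - j)) := by
      intro j hj
      have hj' : j < k := Finset.mem_range.mp hj
      have hsplit : ((q ^ 2 : ℂ)) ^ (m + k) = (q ^ 2) ^ j * (q ^ 2) ^ (m + k - j) := by
        rw [← pow_add]
        congr 1
        omega
      linear_combination (-(1:ℂ)) * huq + (u ^ 2) * hsplit
    have h3 : (∏ j ∈ Finset.range k, (-(u ^ 2 * (q ^ 2) ^ j)))
        = (-1) ^ k * (u ^ 2) ^ k * q ^ (k * (k - 1)) := by
      calc (∏ j ∈ Finset.range k, (-(u ^ 2 * (q ^ 2) ^ j)))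
          = ∏ j ∈ Finset.range k, ((-(u ^ 2)) * (q ^ 2) ^ j) := by
            exact Finset.prod_congr rfl fun j _ => by ring
        _ = (-(u ^ 2)) ^ k * ∏ j ∈ Finset.range k, ((q ^ 2) ^ j) := by
            rw [Finset.prod_mul_distrib, Finset.prod_const, Finset.card_range]
        _ = (-1) ^ k * (u ^ 2) ^ k * q ^ (k * (k - 1)) := by
            rw [prod_q2, neg_pow]
      -- done
    have h4 : (∏ j ∈ Finset.range k, ((1 : ℂ) - (q ^ 2) ^ (m + k - j)))
        = qp (q ^ 2) (q ^ 2) (m + k) / qp (q ^ 2) (q ^ 2) m := by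
      rw [eq_div_iff hY, mul_comm]
      exact (qp_split (q ^ 2) m k).symm
    rw [h1, Finset.prod_congr rfl h2, Finset.prod_mul_distrib, h3, h4]
  -- the power identity
  have hpow : q ^ ((m + k) * (m + k - 1)) * ((u ^ 2) ^ k * q ^ (k * (k - 1)) * (q ^ 2) ^ k)
      = q ^ (m * (m - 1)) := by
    have hu2k : (u ^ 2) ^ k = q ^ ((-((m + k : ℕ) : ℤ)) * (2 * k)) := by
      rw [hu, ← pow_mul, ← zpow_natCast (q ^ (-((m + k : ℕ) : ℤ))) (2 * k), ← zpow_mul]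
      push_cast
      ring_nf
    rw [hu2k, ← zpow_natCast q ((m + k) * (m + k - 1)), ← zpow_natCast q (k * (k - 1)),
      ← zpow_natCast q (m * (m - 1)), ← zpow_natCast (q ^ 2) k, ← zpow_natCast q 2,
      ← zpow_mul, ← zpow_add₀ hq0, ← zpow_add₀ hq0, ← zpow_add₀ hq0]
    congr 1
    rw [cast_mul_pred, cast_mul_pred, cast_mul_pred]
    push_cast
    ring
  have hsgn : ((-1 : ℂ)) ^ (m + k) * (-1) ^ k = (-1) ^ m := by
    rw [pow_add, mul_assoc, ← mul_pow]
    norm_num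
  have hsc : (-a) ^ (m + k) * q ^ ((m + k) * (m + k - 1)) *
      ((-1) ^ k * (u ^ 2) ^ k * q ^ (k * (k - 1))) * (q ^ 2 / a) ^ k
      = (-1) ^ m * q ^ (m * (m - 1)) * a ^ m := by
    rw [div_pow, neg_pow, pow_add a]
    rw [← hpow, ← hsgn]
    have hak : a ^ k * (a ^ k)⁻¹ = 1 := mul_inv_cancel₀ (pow_ne_zero k ha)
    rw [div_eq_mul_inv]
    linear_combination ((-1 : ℂ) ^ (m + k) * (-1) ^ k * a ^ m * q ^ ((m + k) * (m + k - 1)) *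
      ((u ^ 2) ^ k * q ^ (k * (k - 1)) * (q ^ 2) ^ k)) * hak
  -- final assembly
  rw [key, ec, dc, prod_q2]
  set X := qp (q ^ 2) (q ^ 2) (m + k)
  set Y := qp (q ^ 2) (q ^ 2) m
  set Z := qp q q k
  calc (-a) ^ (m + k) * q ^ ((m + k) * (m + k - 1)) / X *
        ((-1) ^ k * (u ^ 2) ^ k * q ^ (k * (k - 1)) * (X / Y) / Z * (q ^ 2 / a) ^ k)
      = ((-a) ^ (m + k) * q ^ ((m + k) * (m + k - 1)) *
          ((-1) ^ k * (u ^ 2) ^ k * q ^ (k * (k - 1))) * (q ^ 2 / a) ^ k) *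
          (X⁻¹ * X) * Y⁻¹ * Z⁻¹ := by
        rw [div_eq_mul_inv, div_eq_mul_inv X Y, div_eq_mul_inv _ Z]
        ring
    _ = ((-1) ^ m * q ^ (m * (m - 1)) * a ^ m) * Y⁻¹ * Z⁻¹ := by
        rw [inv_mul_cancel₀ hX, mul_one, hsc]
    _ = (-1) ^ m * q ^ (m * (m - 1)) / Y * a ^ m * (1 / Z) := by
        rw [div_eq_mul_inv, one_div]
        ring

theorem stmt1 (q a : ℂ) (hq0 : q ≠ 0) (hq : ‖q‖ < 1) (ha : a ≠ 0)
    (lam : ℕ → ℂ)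
    (hlam : ∀ x : ℂ, ‖x‖ < 1 →
      qpinf (a * x) (q ^ 2) / qpinf x q = ∑' n : ℕ, lam n * x ^ n)
    (n : ℕ) :
    lam n = (-a) ^ n * q ^ (n * (n - 1)) / qp (q ^ 2) (q ^ 2) n *
      ∑ k ∈ Finset.range (n + 1),
        qp (q ^ (-(n : ℤ))) q k * qp (-(q ^ (-(n : ℤ)))) q k / qp q q k * (q ^ 2 / a) ^ k := by
  have hlam' : lam = mu q a := lam_eq_mu hq lam hlam
  rw [hlam']
  have hrefl : mu q a n
      = ∑ k ∈ Finset.range (n + 1), ec (q ^ 2) (n - k) * a ^ (n - k) * dc q (n - (n - k)) := by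
    rw [mu]
    have := Finset.sum_range_reflect (fun k => ec (q ^ 2) k * a ^ k * dc q (n - k)) (n + 1)
    simp only [Nat.add_sub_cancel] at this
    exact this.symm
  rw [hrefl, Finset.mul_sum]
  refine Finset.sum_congr rfl fun k hk => ?_
  have hk' : k ≤ n := Finset.mem_range_succ_iff.mp hk
  have h1 : n - (n - k) = k := by omega
  rw [h1]
  set m := n - k with hm
  rw [show n = m + k from by omega]
  exact (term_eq hq0 hq ha m k).symm
end

section
/- For |q|<1 and complex a, b with |a|,|b|<1: Σ_{n≥0} h_n(a,b|q²) / (q;q)_n = (abq;q²)_∞ / ((a;q)_∞ (b;q)_∞), where h_n(a,b|q²) = Σ_{k=0}^n [n choose k]_{q²} a^k b^{n−k}. -/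
open Finset

open Filter Topology

namespace Stmt8

lemma qp_succ (x q : ℂ) (n : ℕ) : qp x q (n + 1) = qp x q n * (1 - x * q ^ n) :=
  Finset.prod_range_succ _ _

/-- helper -/
lemma one_le_prod_one_add (v : ℕ → ℝ) (hv : ∀ j, 0 ≤ v j) (s : Finset ℕ) :
    (1:ℝ) ≤ ∏ j ∈ s, (1 + v j) := by
  calc (1:ℝ) = ∏ _j ∈ s, 1 := by simp
  _ ≤ ∏ j ∈ s, (1 + v j) :=
    Finset.prod_le_prod (by intros; norm_num) (fun j _ => by linarith [hv j])

/-- basic estimate : ‖∏ (1 - u j) - 1‖ ≤ ∏ (1 + ‖u j‖) - 1 -/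
lemma prod_sub_one_est (u : ℕ → ℂ) (s : Finset ℕ) :
    ‖∏ j ∈ s, (1 - u j) - 1‖ ≤ ∏ j ∈ s, (1 + ‖u j‖) - 1 := by
  induction s using Finset.induction with
  | empty => simp
  | @insert a s' ha ih =>
    rw [Finset.prod_insert ha, Finset.prod_insert ha]
    have h1 : (1 - u a) * ∏ j ∈ s', (1 - u j) - 1
        = (1 - u a) * (∏ j ∈ s', (1 - u j) - 1) + (-u a) := by ring
    rw [h1]
    have h2 : ‖(1 - u a) * (∏ j ∈ s', (1 - u j) - 1) + (-u a)‖
        ≤ ‖1 - u a‖ * ‖∏ j ∈ s', (1 - u j) - 1‖ + ‖u a‖ := by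
      refine (norm_add_le _ _).trans ?_
      rw [norm_mul, norm_neg]
    refine h2.trans ?_
    have h3 : ‖(1 : ℂ) - u a‖ ≤ 1 + ‖u a‖ := by
      refine (norm_sub_le _ _).trans ?_
      simp
    have h4 : (0:ℝ) ≤ ∏ j ∈ s', (1 + ‖u j‖) - 1 := by
      have := one_le_prod_one_add (fun j => ‖u j‖) (fun j => norm_nonneg _) s'
      linarith
    have h5 := one_le_prod_one_add (fun j => ‖u j‖) (fun j => norm_nonneg _) s'
    nlinarith [norm_nonneg (u a), norm_nonneg (∏ j ∈ s', (1 - u j) - 1)]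

lemma prod_le_exp (v : ℕ → ℝ) (hv : ∀ j, 0 ≤ v j) (s : Finset ℕ) :
    ∏ j ∈ s, (1 + v j) ≤ Real.exp (∑ j ∈ s, v j) := by
  rw [Real.exp_sum]
  exact Finset.prod_le_prod (fun j _ => by linarith [hv j])
    (fun j _ => by linarith [Real.add_one_le_exp (v j)])

end Stmt8

namespace Stmt8

lemma norm_prod_one_sub_le (u : ℕ → ℂ) (s : Finset ℕ) :
    ‖∏ j ∈ s, (1 - u j)‖ ≤ ∏ j ∈ s, (1 + ‖u j‖) := by
  rw [norm_prod]
  refine Finset.prod_le_prod (fun j _ => norm_nonneg _) (fun j _ => ?_)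
  refine (norm_sub_le _ _).trans ?_
  simp

/-- Convergence of infinite products `∏ (1 - u j)` for absolutely summable `u`. -/
lemma hasProd_one_sub (u : ℕ → ℂ) (hu : Summable fun j => ‖u j‖) :
    ∃ L : ℂ, HasProd (fun j => 1 - u j) L ∧
      Tendsto (fun n => ∏ j ∈ Finset.range n, (1 - u j)) atTop (𝓝 L) := by
  set g : Finset ℕ → ℂ := fun s => ∏ j ∈ s, (1 - u j) with hg
  set S : ℝ := ∑' j, ‖u j‖ with hS
  have hSnn : 0 ≤ S := tsum_nonneg fun j => norm_nonneg _
  -- tail bound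
  have htail : ∀ n : ℕ, ∀ t : Finset ℕ, Disjoint t (Finset.range n) →
      ∑ j ∈ t, ‖u j‖ ≤ S - ∑ j ∈ Finset.range n, ‖u j‖ := by
    intro n t hdisj
    have h1 : ∑ j ∈ Finset.range n, ‖u j‖ + ∑ j ∈ t, ‖u j‖
        = ∑ j ∈ Finset.range n ∪ t, ‖u j‖ := (Finset.sum_union hdisj.symm).symm
    have h2 : ∑ j ∈ Finset.range n ∪ t, ‖u j‖ ≤ S :=
      Summable.sum_le_tsum _ (fun j _ => norm_nonneg _) hu
    linarith
  -- partial sums tendsto S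
  have hpt : Tendsto (fun n => ∑ j ∈ Finset.range n, ‖u j‖) atTop (𝓝 S) :=
    hu.hasSum.tendsto_sum_nat
  have hCS : CauchySeq g := by
    rw [Metric.cauchySeq_iff']
    intro ε hε
    -- choose n with exp S * (exp (S - partial n) - 1) < ε
    have hlim : Tendsto (fun n => Real.exp S * (Real.exp (S - ∑ j ∈ Finset.range n, ‖u j‖) - 1))
        atTop (𝓝 (Real.exp S * (Real.exp 0 - 1))) := by
      refine Tendsto.mul tendsto_const_nhds (Tendsto.sub ?_ tendsto_const_nhds)
      exact (Real.continuous_exp.tendsto 0).comp (by simpa using (tendsto_const_nhds (x := S)).sub hpt)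
    rw [Real.exp_zero] at hlim
    simp only [sub_self, mul_zero] at hlim
    have hev : ∀ᶠ n in atTop,
        Real.exp S * (Real.exp (S - ∑ j ∈ Finset.range n, ‖u j‖) - 1) < ε :=
      hlim.eventually_lt_const hε
    obtain ⟨n, hn⟩ := hev.exists
    refine ⟨Finset.range n, fun s hs => ?_⟩
    -- s ⊇ range n
    have hsplit : g s = g (Finset.range n) * ∏ j ∈ s \ Finset.range n, (1 - u j) := by
      rw [hg]
      rw [← Finset.prod_union (Finset.disjoint_sdiff)]
      congr 1
      exact (Finset.union_sdiff_of_subset hs).symm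
    have hd : dist (g s) (g (Finset.range n)) = ‖g (Finset.range n)‖ *
        ‖∏ j ∈ s \ Finset.range n, (1 - u j) - 1‖ := by
      rw [dist_eq_norm, hsplit, ← norm_mul]
      congr 1
      ring
    rw [hd]
    have hb1 : ‖g (Finset.range n)‖ ≤ Real.exp S := by
      refine (norm_prod_one_sub_le u _).trans ?_
      refine (prod_le_exp (fun j => ‖u j‖) (fun j => norm_nonneg _) _).trans ?_
      exact Real.exp_le_exp.2 (Summable.sum_le_tsum _ (fun j _ => norm_nonneg _) hu)
    have hb2 : ‖∏ j ∈ s \ Finset.range n, (1 - u j) - 1‖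
        ≤ Real.exp (S - ∑ j ∈ Finset.range n, ‖u j‖) - 1 := by
      refine (prod_sub_one_est u _).trans ?_
      have := prod_le_exp (fun j => ‖u j‖) (fun j => norm_nonneg _) (s \ Finset.range n)
      have htb := htail n (s \ Finset.range n) Finset.sdiff_disjoint
      have := this.trans (Real.exp_le_exp.2 htb)
      linarith
    calc ‖g (Finset.range n)‖ * ‖∏ j ∈ s \ Finset.range n, (1 - u j) - 1‖
        ≤ Real.exp S * (Real.exp (S - ∑ j ∈ Finset.range n, ‖u j‖) - 1) := by
          have h0 : (0:ℝ) ≤ ‖∏ j ∈ s \ Finset.range n, (1 - u j) - 1‖ := norm_nonneg _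
          have hexp1 : (1:ℝ) ≤ Real.exp (S - ∑ j ∈ Finset.range n, ‖u j‖) := by
            rw [← Real.exp_zero]
            refine Real.exp_le_exp.2 ?_
            have := Summable.sum_le_tsum (Finset.range n) (fun j _ => norm_nonneg (u j)) hu
            linarith
          nlinarith [norm_nonneg (g (Finset.range n)), Real.exp_pos S]
      _ < ε := hn
  obtain ⟨L, hL⟩ := cauchySeq_tendsto_of_complete hCS
  exact ⟨L, hL, hL.comp tendsto_finset_range⟩

end Stmt8

namespace Stmt8

lemma summable_norm_xq (x q : ℂ) (hq : ‖q‖ < 1) :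
    Summable fun j : ℕ => ‖x * q ^ j‖ := by
  simp only [norm_mul, norm_pow]
  exact (summable_geometric_of_lt_one (norm_nonneg q) hq).mul_left _

lemma qpinf_tendsto (x q : ℂ) (hq : ‖q‖ < 1) :
    Tendsto (fun n => qp x q n) atTop (𝓝 (qpinf x q)) := by
  obtain ⟨L, hL, hLt⟩ := hasProd_one_sub (fun j => x * q ^ j) (summable_norm_xq x q hq)
  have : qpinf x q = L := hL.tprod_eq
  rw [qpinf] at this ⊢
  rw [this]
  exact hLt

/-- uniform lower bound for partial products of positive reals -/
lemma prod_lb (v : ℕ → ℝ) (h0 : ∀ j, 0 ≤ v j) (h1 : ∀ j, v j < 1) (hs : Summable v) :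
    ∃ c : ℝ, 0 < c ∧ ∀ n, c ≤ ∏ j ∈ Finset.range n, (1 - v j) := by
  -- subsidiary: ∏ over any finset ≥ 1 - ∑
  have aux : ∀ t : Finset ℕ, 1 - ∑ j ∈ t, v j ≤ ∏ j ∈ t, (1 - v j) := by
    intro t
    induction t using Finset.induction with
    | empty => simp
    | @insert a s' ha ih =>
      rw [Finset.prod_insert ha, Finset.sum_insert ha]
      have hps : (0:ℝ) ≤ ∏ j ∈ s', (1 - v j) :=
        Finset.prod_nonneg fun j _ => by linarith [h1 j]
      have hsnn : (0:ℝ) ≤ ∑ j ∈ s', v j := Finset.sum_nonneg fun j _ => h0 j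
      nlinarith [h0 a, h1 a]
  -- choose n₀ with tail ≤ 1/2
  have hpt : Tendsto (fun n => ∑ j ∈ Finset.range n, v j) atTop (𝓝 (∑' j, v j)) :=
    hs.hasSum.tendsto_sum_nat
  have : ∀ᶠ n in atTop, (∑' j, v j) - ∑ j ∈ Finset.range n, v j < 1/2 := by
    have : Tendsto (fun n => (∑' j, v j) - ∑ j ∈ Finset.range n, v j) atTop (𝓝 0) := by
      simpa using (tendsto_const_nhds (x := ∑' j, v j)).sub hpt
    exact this.eventually_lt_const (by norm_num)
  obtain ⟨n₀, hn₀⟩ := this.exists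
  have hP0 : 0 < ∏ j ∈ Finset.range n₀, (1 - v j) :=
    Finset.prod_pos fun j _ => by linarith [h1 j]
  refine ⟨(∏ j ∈ Finset.range n₀, (1 - v j)) * (1/2), by positivity, fun n => ?_⟩
  rcases le_or_gt n n₀ with h | h
  · have hmono : ∏ j ∈ Finset.range n₀, (1 - v j) ≤ ∏ j ∈ Finset.range n, (1 - v j) := by
      rw [← Finset.prod_range_mul_prod_Ico _ h]
      have h2 : ∏ j ∈ Finset.Ico n n₀, (1 - v j) ≤ 1 := by
        refine Finset.prod_le_one (fun j _ => by linarith [h1 j]) (fun j _ => by linarith [h0 j])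
      have h3 : (0:ℝ) ≤ ∏ j ∈ Finset.range n, (1 - v j) :=
        Finset.prod_nonneg fun j _ => by linarith [h1 j]
      nlinarith
    nlinarith
  · rw [← Finset.prod_range_mul_prod_Ico _ h.le]
    have htail : ∑ j ∈ Finset.Ico n₀ n, v j ≤ 1/2 := by
      have hd : ∑ j ∈ Finset.range n₀, v j + ∑ j ∈ Finset.Ico n₀ n, v j
          = ∑ j ∈ Finset.range n, v j := Finset.sum_range_add_sum_Ico _ h.le
      have hle : ∑ j ∈ Finset.range n, v j ≤ ∑' j, v j :=
        Summable.sum_le_tsum _ (fun j _ => h0 j) hs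
      linarith
    have h4 := aux (Finset.Ico n₀ n)
    have : (1:ℝ)/2 ≤ ∏ j ∈ Finset.Ico n₀ n, (1 - v j) := by linarith
    nlinarith
lemma qp_lb (x q : ℂ) (hx : ‖x‖ < 1) (hq : ‖q‖ < 1) :
    ∃ c : ℝ, 0 < c ∧ ∀ n, c ≤ ‖qp x q n‖ := by
  obtain ⟨c, hc, hcle⟩ := prod_lb (fun j => ‖x‖ * ‖q‖ ^ j)
    (fun j => by positivity)
    (fun j => by
      show ‖x‖ * ‖q‖ ^ j < 1
      have : ‖q‖ ^ j ≤ 1 := pow_le_one₀ (norm_nonneg q) hq.le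
      nlinarith [norm_nonneg x])
    ((summable_geometric_of_lt_one (norm_nonneg q) hq).mul_left _)
  refine ⟨c, hc, fun n => (hcle n).trans ?_⟩
  rw [qp, norm_prod]
  refine Finset.prod_le_prod (fun j _ => by nlinarith [pow_le_one₀ (norm_nonneg q) hq.le (n := j), norm_nonneg x, (pow_nonneg (norm_nonneg q) j)]) (fun j _ => ?_)
  have h1 : ‖(1:ℂ)‖ - ‖x * q ^ j‖ ≤ ‖1 - x * q ^ j‖ := norm_sub_norm_le _ _
  simpa [norm_mul, norm_pow] using h1

lemma qp_ub (x q : ℂ) (hq : ‖q‖ < 1) :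
    ∃ C : ℝ, 0 < C ∧ ∀ n, ‖qp x q n‖ ≤ C := by
  refine ⟨Real.exp (∑' j, ‖x * q ^ j‖), Real.exp_pos _, fun n => ?_⟩
  refine (norm_prod_one_sub_le _ _).trans ?_
  refine (prod_le_exp (fun j => ‖x * q ^ j‖) (fun j => norm_nonneg _) _).trans ?_
  exact Real.exp_le_exp.2 (Summable.sum_le_tsum _ (fun j _ => norm_nonneg _) (summable_norm_xq x q hq))

end Stmt8

namespace Stmt8

lemma one_sub_ne (z : ℂ) (hz : ‖z‖ < 1) : (1 : ℂ) - z ≠ 0 := by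
  intro h
  have : (1:ℂ) = z := by linear_combination h
  rw [← this] at hz
  simp at hz

lemma qp_ne (x q : ℂ) (hx : ‖x‖ < 1) (hq : ‖q‖ ≤ 1) (n : ℕ) : qp x q n ≠ 0 := by
  rw [qp]
  refine Finset.prod_ne_zero_iff.2 fun j _ => one_sub_ne _ ?_
  rw [norm_mul, norm_pow]
  have h1 : ‖q‖ ^ j ≤ 1 := pow_le_one₀ (norm_nonneg q) hq
  nlinarith [norm_nonneg x]

lemma summable_norm_euler1 (q x : ℂ) (hq : ‖q‖ < 1) (hx : ‖x‖ < 1) :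
    Summable fun n => ‖x ^ n / qp q q n‖ := by
  obtain ⟨c, hc, hcle⟩ := qp_lb q q hq hq
  refine Summable.of_nonneg_of_le (fun n => norm_nonneg _) (fun n => ?_)
    (((summable_geometric_of_lt_one (norm_nonneg x) hx)).mul_right c⁻¹)
  rw [norm_div, norm_pow]
  rw [div_eq_mul_inv]
  have h2 : ‖qp q q n‖⁻¹ ≤ c⁻¹ := by
    refine inv_anti₀ hc (hcle n)
  have h3 : (0:ℝ) ≤ ‖x‖ ^ n := pow_nonneg (norm_nonneg x) n
  nlinarith [inv_nonneg.2 (norm_nonneg (qp q q n))]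

lemma euler1_feq (q y : ℂ) (hq : ‖q‖ < 1) (hy : ‖y‖ < 1) :
    (∑' n : ℕ, (y * q) ^ n / qp q q n) = (1 - y) * ∑' n : ℕ, y ^ n / qp q q n := by
  have hyq : ‖y * q‖ < 1 := by
    rw [norm_mul]
    nlinarith [norm_nonneg y, norm_nonneg q]
  have hs1 : Summable fun n : ℕ => y ^ n / qp q q n :=
    (summable_norm_euler1 q y hq hy).of_norm
  have hs2 : Summable fun n : ℕ => (y * q) ^ n / qp q q n :=
    (summable_norm_euler1 q (y * q) hq hyq).of_norm
  have key : ∀ n : ℕ, y ^ (n+1) / qp q q (n+1) - (y*q) ^ (n+1) / qp q q (n+1)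
      = y * (y ^ n / qp q q n) := by
    intro n
    rw [qp_succ]
    have h1 : qp q q n ≠ 0 := qp_ne q q hq hq.le n
    have h2 : (1 : ℂ) - q * q ^ n ≠ 0 := by
      refine one_sub_ne _ ?_
      rw [norm_mul, norm_pow]
      have : ‖q‖ ^ n ≤ 1 := pow_le_one₀ (norm_nonneg q) hq.le
      nlinarith [norm_nonneg q]
    field_simp
    ring
  have hd : Summable fun n : ℕ => y ^ n / qp q q n - (y*q) ^ n / qp q q n := hs1.sub hs2
  have h0 : (fun n : ℕ => y ^ n / qp q q n - (y*q) ^ n / qp q q n) 0 = 0 := by simp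
  have hsplit : (∑' n : ℕ, (y ^ n / qp q q n - (y*q) ^ n / qp q q n))
      = ∑' n : ℕ, (y ^ (n+1) / qp q q (n+1) - (y*q) ^ (n+1) / qp q q (n+1)) := by
    rw [Summable.tsum_eq_zero_add hd]
    simp [qp]
  have : (∑' n : ℕ, y ^ n / qp q q n) - (∑' n : ℕ, (y*q) ^ n / qp q q n)
      = y * ∑' n : ℕ, y ^ n / qp q q n := by
    rw [← Summable.tsum_sub hs1 hs2, hsplit]
    simp_rw [key]
    exact tsum_mul_left
  linear_combination -this

lemma euler1_iter (q x : ℂ) (hq : ‖q‖ < 1) (hx : ‖x‖ < 1) (n : ℕ) :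
    (∑' m : ℕ, (x * q ^ n) ^ m / qp q q m) = qp x q n * ∑' m : ℕ, x ^ m / qp q q m := by
  induction n with
  | zero => simp [qp]
  | succ n ih =>
    have hxqn : ‖x * q ^ n‖ < 1 := by
      rw [norm_mul, norm_pow]
      have : ‖q‖ ^ n ≤ 1 := pow_le_one₀ (norm_nonneg q) hq.le
      nlinarith [norm_nonneg x]
    have h1 : x * q ^ (n+1) = (x * q ^ n) * q := by ring
    rw [h1, euler1_feq q (x * q ^ n) hq hxqn, ih, qp_succ]
    ring

lemma euler1_tendsto_one (q x : ℂ) (hq : ‖q‖ < 1) (hx : ‖x‖ < 1) :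
    Tendsto (fun n => ∑' m : ℕ, (x * q ^ n) ^ m / qp q q m) atTop (𝓝 1) := by
  obtain ⟨c, hc, hcle⟩ := qp_lb q q hq hq
  rw [← tendsto_sub_nhds_zero_iff]
  rw [tendsto_zero_iff_norm_tendsto_zero]
  refine squeeze_zero (fun n => norm_nonneg _)
    (g := fun n => ‖x‖ * ‖q‖ ^ n * (c⁻¹ * (1 - ‖x‖)⁻¹)) (fun n => ?_) ?_
  · have hxqn : ‖x * q ^ n‖ < 1 := by
      rw [norm_mul, norm_pow]
      have : ‖q‖ ^ n ≤ 1 := pow_le_one₀ (norm_nonneg q) hq.le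
      nlinarith [norm_nonneg x]
    set y := x * q ^ n with hy
    have hsy : Summable fun m : ℕ => y ^ m / qp q q m :=
      (summable_norm_euler1 q y hq hxqn).of_norm
    have hsplit : (∑' m : ℕ, y ^ m / qp q q m) - 1
        = ∑' m : ℕ, y ^ (m+1) / qp q q (m+1) := by
      rw [Summable.tsum_eq_zero_add hsy]
      simp [qp]
    rw [hsplit]
    refine (norm_tsum_le_tsum_norm ((summable_norm_euler1 q y hq hxqn).comp_injective
      (add_left_injective 1))).trans ?_
    have hb : ∀ m : ℕ, ‖y ^ (m+1) / qp q q (m+1)‖ ≤ (‖y‖ * c⁻¹) * ‖y‖ ^ m := by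
      intro m
      rw [norm_div, norm_pow]
      have h1 : ‖y‖ ^ (m+1) / ‖qp q q (m+1)‖ ≤ ‖y‖ ^ (m+1) / c :=
        div_le_div_of_nonneg_left (pow_nonneg (norm_nonneg y) _) hc (hcle (m+1))
      refine h1.trans ?_
      rw [pow_succ, div_eq_mul_inv]
      ring_nf
      nlinarith [pow_nonneg (norm_nonneg y) m, norm_nonneg y, inv_nonneg.2 hc.le,
        pow_le_pow_left₀ (norm_nonneg y) (le_refl ‖y‖) m]
    refine (Summable.tsum_le_tsum hb ((summable_norm_euler1 q y hq hxqn).comp_injective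
      (add_left_injective 1)) ((summable_geometric_of_lt_one (norm_nonneg y) hxqn).mul_left _)).trans ?_
    rw [tsum_mul_left, tsum_geometric_of_lt_one (norm_nonneg y) hxqn]
    have hyx : ‖y‖ ≤ ‖x‖ * ‖q‖ ^ n := by
      rw [hy, norm_mul, norm_pow]
    have hinv : (1 - ‖y‖)⁻¹ ≤ (1 - ‖x‖)⁻¹ := by
      have h3 : ‖q‖ ^ n ≤ 1 := pow_le_one₀ (norm_nonneg q) hq.le
      have h4 : ‖y‖ ≤ ‖x‖ := by nlinarith [norm_nonneg x]
      have h5 : (0:ℝ) < 1 - ‖x‖ := by linarith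
      exact inv_anti₀ h5 (by linarith)
    have h6 : (0:ℝ) ≤ (1 - ‖y‖)⁻¹ := by
      have : (0:ℝ) < 1 - ‖y‖ := by linarith
      positivity
    have h7 : (0:ℝ) ≤ ‖y‖ * c⁻¹ := by positivity
    have h8 : (0:ℝ) ≤ c⁻¹ := by positivity
    have h10 := mul_le_mul (mul_le_mul_of_nonneg_right hyx h8) hinv h6
      (by positivity : (0:ℝ) ≤ ‖x‖ * ‖q‖ ^ n * c⁻¹)
    calc ‖y‖ * c⁻¹ * (1 - ‖y‖)⁻¹ ≤ ‖x‖ * ‖q‖ ^ n * c⁻¹ * (1 - ‖x‖)⁻¹ := h10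
      _ = ‖x‖ * ‖q‖ ^ n * (c⁻¹ * (1 - ‖x‖)⁻¹) := by ring
  · have : Tendsto (fun n => ‖x‖ * ‖q‖ ^ n) atTop (𝓝 0) := by
      simpa using (tendsto_pow_atTop_nhds_zero_of_lt_one (norm_nonneg q) hq).const_mul ‖x‖
    simpa using this.mul_const (c⁻¹ * (1 - ‖x‖)⁻¹)

end Stmt8

namespace Stmt8

lemma euler1 (q x : ℂ) (hq : ‖q‖ < 1) (hx : ‖x‖ < 1) :
    qpinf x q * (∑' n : ℕ, x ^ n / qp q q n) = 1 := by
  have h1 : Tendsto (fun n => qp x q n * ∑' m : ℕ, x ^ m / qp q q m) atTop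
      (𝓝 (qpinf x q * ∑' m : ℕ, x ^ m / qp q q m)) :=
    (qpinf_tendsto x q hq).mul_const _
  have h2 : Tendsto (fun n => qp x q n * ∑' m : ℕ, x ^ m / qp q q m) atTop (𝓝 1) := by
    have := euler1_tendsto_one q x hq hx
    refine this.congr fun n => euler1_iter q x hq hx n
  exact tendsto_nhds_unique h1 h2

lemma euler1' (q x : ℂ) (hq : ‖q‖ < 1) (hx : ‖x‖ < 1) :
    qpinf x q ≠ 0 ∧ (∑' n : ℕ, x ^ n / qp q q n) = (qpinf x q)⁻¹ := by
  have h := euler1 q x hq hx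
  constructor
  · intro h0; rw [h0, zero_mul] at h; exact one_ne_zero h.symm
  · field_simp at h ⊢
    have h0 : qpinf x q ≠ 0 := by intro h0; rw [h0, zero_mul] at h; exact one_ne_zero h.symm
    field_simp
    linear_combination h

/-! ### Euler 2 : `∑ (-1)^n Q^(n choose 2) t^n / (Q;Q)_n = (t;Q)_∞` -/

lemma summable_norm_euler2 (Q t : ℂ) (hQ : ‖Q‖ < 1) (ht : ‖t‖ < 1) :
    Summable fun n => ‖(-1 : ℂ) ^ n * Q ^ (n.choose 2) * t ^ n / qp Q Q n‖ := by
  obtain ⟨c, hc, hcle⟩ := qp_lb Q Q hQ hQ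
  refine Summable.of_nonneg_of_le (fun n => norm_nonneg _) (fun n => ?_)
    (((summable_geometric_of_lt_one (norm_nonneg t) ht)).mul_right c⁻¹)
  rw [norm_div, norm_mul, norm_mul, norm_pow, norm_pow, norm_pow]
  simp only [norm_neg, norm_one, one_pow, one_mul]
  have h1 : ‖Q‖ ^ (n.choose 2) ≤ 1 := pow_le_one₀ (norm_nonneg Q) hQ.le
  have h2 : ‖Q‖ ^ n.choose 2 * ‖t‖ ^ n ≤ ‖t‖ ^ n := by
    nlinarith [pow_nonneg (norm_nonneg t) n, pow_nonneg (norm_nonneg Q) (n.choose 2)]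
  have h3 : ‖qp Q Q n‖ ≥ c := hcle n
  rw [div_eq_mul_inv]
  have h4 : ‖qp Q Q n‖⁻¹ ≤ c⁻¹ := inv_anti₀ hc h3
  have h5 : (0:ℝ) ≤ ‖Q‖ ^ n.choose 2 * ‖t‖ ^ n := by positivity
  nlinarith [pow_nonneg (norm_nonneg t) n, inv_nonneg.2 (norm_nonneg (qp Q Q n)), inv_nonneg.2 hc.le]

lemma euler2_feq (Q y : ℂ) (hQ : ‖Q‖ < 1) (hy : ‖y‖ < 1) :
    (∑' n : ℕ, (-1 : ℂ) ^ n * Q ^ (n.choose 2) * y ^ n / qp Q Q n)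
      = (1 - y) * ∑' n : ℕ, (-1 : ℂ) ^ n * Q ^ (n.choose 2) * (y * Q) ^ n / qp Q Q n := by
  have hyQ : ‖y * Q‖ < 1 := by
    rw [norm_mul]; nlinarith [norm_nonneg y, norm_nonneg Q]
  have hs1 : Summable fun n : ℕ => (-1 : ℂ) ^ n * Q ^ (n.choose 2) * y ^ n / qp Q Q n :=
    (summable_norm_euler2 Q y hQ hy).of_norm
  have hs2 : Summable fun n : ℕ => (-1 : ℂ) ^ n * Q ^ (n.choose 2) * (y * Q) ^ n / qp Q Q n :=
    (summable_norm_euler2 Q (y * Q) hQ hyQ).of_norm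
  have key : ∀ n : ℕ,
      (-1 : ℂ) ^ (n+1) * Q ^ ((n+1).choose 2) * y ^ (n+1) / qp Q Q (n+1)
        - (-1 : ℂ) ^ (n+1) * Q ^ ((n+1).choose 2) * (y * Q) ^ (n+1) / qp Q Q (n+1)
      = (-y) * ((-1 : ℂ) ^ n * Q ^ (n.choose 2) * (y * Q) ^ n / qp Q Q n) := by
    intro n
    have hch : (n+1).choose 2 = n.choose 2 + n := by
      rw [Nat.choose_succ_succ]
      simp [Nat.choose_one_right, Nat.add_comm]
    rw [qp_succ, hch]
    have h1 : qp Q Q n ≠ 0 := qp_ne Q Q hQ hQ.le n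
    have h2 : (1 : ℂ) - Q * Q ^ n ≠ 0 := by
      refine one_sub_ne _ ?_
      rw [norm_mul, norm_pow]
      have : ‖Q‖ ^ n ≤ 1 := pow_le_one₀ (norm_nonneg Q) hQ.le
      nlinarith [norm_nonneg Q]
    field_simp
    ring
  have hd : Summable fun n : ℕ =>
      (-1 : ℂ) ^ n * Q ^ (n.choose 2) * y ^ n / qp Q Q n
        - (-1 : ℂ) ^ n * Q ^ (n.choose 2) * (y * Q) ^ n / qp Q Q n := hs1.sub hs2
  have hsplit : (∑' n : ℕ, ((-1 : ℂ) ^ n * Q ^ (n.choose 2) * y ^ n / qp Q Q n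
        - (-1 : ℂ) ^ n * Q ^ (n.choose 2) * (y * Q) ^ n / qp Q Q n))
      = ∑' n : ℕ, ((-1 : ℂ) ^ (n+1) * Q ^ ((n+1).choose 2) * y ^ (n+1) / qp Q Q (n+1)
        - (-1 : ℂ) ^ (n+1) * Q ^ ((n+1).choose 2) * (y * Q) ^ (n+1) / qp Q Q (n+1)) := by
    rw [Summable.tsum_eq_zero_add hd]
    simp [qp]
  have hmain : (∑' n : ℕ, (-1 : ℂ) ^ n * Q ^ (n.choose 2) * y ^ n / qp Q Q n)
      - (∑' n : ℕ, (-1 : ℂ) ^ n * Q ^ (n.choose 2) * (y * Q) ^ n / qp Q Q n)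
      = (-y) * ∑' n : ℕ, (-1 : ℂ) ^ n * Q ^ (n.choose 2) * (y * Q) ^ n / qp Q Q n := by
    rw [← Summable.tsum_sub hs1 hs2, hsplit]
    simp_rw [key]
    exact tsum_mul_left
  linear_combination hmain

lemma euler2_iter (Q t : ℂ) (hQ : ‖Q‖ < 1) (ht : ‖t‖ < 1) (n : ℕ) :
    (∑' m : ℕ, (-1 : ℂ) ^ m * Q ^ (m.choose 2) * t ^ m / qp Q Q m)
      = qp t Q n * ∑' m : ℕ, (-1 : ℂ) ^ m * Q ^ (m.choose 2) * (t * Q ^ n) ^ m / qp Q Q m := by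
  induction n with
  | zero => simp [qp]
  | succ n ih =>
    have htQn : ‖t * Q ^ n‖ < 1 := by
      rw [norm_mul, norm_pow]
      have : ‖Q‖ ^ n ≤ 1 := pow_le_one₀ (norm_nonneg Q) hQ.le
      nlinarith [norm_nonneg t]
    rw [ih, euler2_feq Q (t * Q ^ n) hQ htQn, qp_succ]
    have h1 : (t * Q ^ n) * Q = t * Q ^ (n+1) := by ring
    rw [h1]
    ring

lemma euler2_tendsto_one (Q t : ℂ) (hQ : ‖Q‖ < 1) (ht : ‖t‖ < 1) :
    Tendsto (fun n => ∑' m : ℕ, (-1 : ℂ) ^ m * Q ^ (m.choose 2) * (t * Q ^ n) ^ m / qp Q Q m)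
      atTop (𝓝 1) := by
  obtain ⟨c, hc, hcle⟩ := qp_lb Q Q hQ hQ
  rw [← tendsto_sub_nhds_zero_iff]
  rw [tendsto_zero_iff_norm_tendsto_zero]
  refine squeeze_zero (fun n => norm_nonneg _)
    (g := fun n => ‖t‖ * ‖Q‖ ^ n * (c⁻¹ * (1 - ‖t‖)⁻¹)) (fun n => ?_) ?_
  · have hxqn : ‖t * Q ^ n‖ < 1 := by
      rw [norm_mul, norm_pow]
      have : ‖Q‖ ^ n ≤ 1 := pow_le_one₀ (norm_nonneg Q) hQ.le
      nlinarith [norm_nonneg t]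
    set y := t * Q ^ n with hy
    have hsy : Summable fun m : ℕ => (-1 : ℂ) ^ m * Q ^ (m.choose 2) * y ^ m / qp Q Q m :=
      (summable_norm_euler2 Q y hQ hxqn).of_norm
    have hsplit : (∑' m : ℕ, (-1 : ℂ) ^ m * Q ^ (m.choose 2) * y ^ m / qp Q Q m) - 1
        = ∑' m : ℕ, (-1 : ℂ) ^ (m+1) * Q ^ ((m+1).choose 2) * y ^ (m+1) / qp Q Q (m+1) := by
      rw [Summable.tsum_eq_zero_add hsy]
      simp [qp]
    rw [hsplit]
    refine (norm_tsum_le_tsum_norm ((summable_norm_euler2 Q y hQ hxqn).comp_injective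
      (add_left_injective 1))).trans ?_
    have hb : ∀ m : ℕ, ‖(-1 : ℂ) ^ (m+1) * Q ^ ((m+1).choose 2) * y ^ (m+1) / qp Q Q (m+1)‖
        ≤ (‖y‖ * c⁻¹) * ‖y‖ ^ m := by
      intro m
      rw [norm_div, norm_mul, norm_mul, norm_pow, norm_pow, norm_pow]
      simp only [norm_neg, norm_one, one_pow, one_mul]
      have h1 : ‖Q‖ ^ ((m+1).choose 2) ≤ 1 := pow_le_one₀ (norm_nonneg Q) hQ.le
      have h4 : ‖qp Q Q (m+1)‖⁻¹ ≤ c⁻¹ := inv_anti₀ hc (hcle (m+1))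
      rw [div_eq_mul_inv, pow_succ]
      have h5 : (0:ℝ) ≤ ‖y‖ ^ m * ‖y‖ := by positivity
      have h6 : ‖Q‖ ^ ((m+1).choose 2) * (‖y‖ ^ m * ‖y‖) ≤ ‖y‖ ^ m * ‖y‖ := by
        nlinarith [pow_nonneg (norm_nonneg Q) ((m+1).choose 2)]
      have h7 : (0:ℝ) ≤ ‖qp Q Q (m+1)‖⁻¹ := inv_nonneg.2 (norm_nonneg _)
      have h8 : (0:ℝ) ≤ c⁻¹ := by positivity
      calc ‖Q‖ ^ ((m+1).choose 2) * (‖y‖ ^ m * ‖y‖) * ‖qp Q Q (m+1)‖⁻¹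
          ≤ (‖y‖ ^ m * ‖y‖) * c⁻¹ := by nlinarith
        _ = (‖y‖ * c⁻¹) * ‖y‖ ^ m := by ring
    refine (Summable.tsum_le_tsum hb ((summable_norm_euler2 Q y hQ hxqn).comp_injective
      (add_left_injective 1)) ((summable_geometric_of_lt_one (norm_nonneg y) hxqn).mul_left _)).trans ?_
    rw [tsum_mul_left, tsum_geometric_of_lt_one (norm_nonneg y) hxqn]
    have hyx : ‖y‖ ≤ ‖t‖ * ‖Q‖ ^ n := by rw [hy, norm_mul, norm_pow]
    have h3 : ‖Q‖ ^ n ≤ 1 := pow_le_one₀ (norm_nonneg Q) hQ.le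
    have h4 : ‖y‖ ≤ ‖t‖ := by nlinarith [norm_nonneg t]
    have h5 : (0:ℝ) < 1 - ‖t‖ := by linarith
    have hinv : (1 - ‖y‖)⁻¹ ≤ (1 - ‖t‖)⁻¹ := inv_anti₀ h5 (by linarith)
    have h6 : (0:ℝ) ≤ (1 - ‖y‖)⁻¹ := by
      have : (0:ℝ) < 1 - ‖y‖ := by linarith
      positivity
    have h8 : (0:ℝ) ≤ c⁻¹ := by positivity
    have h10 := mul_le_mul (mul_le_mul_of_nonneg_right hyx h8) hinv h6
      (by positivity : (0:ℝ) ≤ ‖t‖ * ‖Q‖ ^ n * c⁻¹)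
    calc ‖y‖ * c⁻¹ * (1 - ‖y‖)⁻¹ ≤ ‖t‖ * ‖Q‖ ^ n * c⁻¹ * (1 - ‖t‖)⁻¹ := h10
      _ = ‖t‖ * ‖Q‖ ^ n * (c⁻¹ * (1 - ‖t‖)⁻¹) := by ring
  · have : Tendsto (fun n => ‖t‖ * ‖Q‖ ^ n) atTop (𝓝 0) := by
      simpa using (tendsto_pow_atTop_nhds_zero_of_lt_one (norm_nonneg Q) hQ).const_mul ‖t‖
    simpa using this.mul_const (c⁻¹ * (1 - ‖t‖)⁻¹)

lemma euler2 (Q t : ℂ) (hQ : ‖Q‖ < 1) (ht : ‖t‖ < 1) :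
    (∑' m : ℕ, (-1 : ℂ) ^ m * Q ^ (m.choose 2) * t ^ m / qp Q Q m) = qpinf t Q := by
  have h1 : Tendsto (fun n => qp t Q n *
      ∑' m : ℕ, (-1 : ℂ) ^ m * Q ^ (m.choose 2) * (t * Q ^ n) ^ m / qp Q Q m) atTop
      (𝓝 (qpinf t Q * 1)) :=
    (qpinf_tendsto t Q hQ).mul (euler2_tendsto_one Q t hQ ht)
  rw [mul_one] at h1
  have h2 : Tendsto (fun _ : ℕ => ∑' m : ℕ, (-1 : ℂ) ^ m * Q ^ (m.choose 2) * t ^ m / qp Q Q m)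
      atTop (𝓝 (∑' m : ℕ, (-1 : ℂ) ^ m * Q ^ (m.choose 2) * t ^ m / qp Q Q m)) :=
    tendsto_const_nhds
  refine tendsto_nhds_unique (h2.congr fun n => ?_) h1
  exact euler2_iter Q t hQ ht n

end Stmt8

namespace Stmt8

noncomputable def TT (q : ℂ) (k m t : ℕ) : ℂ :=
  if t ≤ k ∧ t ≤ m then
    (-1) ^ t * q ^ (t ^ 2) / (qp (q^2) (q^2) t * (qp q q (k - t) * qp q q (m - t)))
  else 0

noncomputable def mu (q : ℂ) (m t : ℕ) : ℂ := q ^ (m - t) * (1 - q ^ (2 * t))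

lemma hq2 {q : ℂ} (hq : ‖q‖ < 1) : ‖q ^ 2‖ < 1 := by
  rw [norm_pow]
  nlinarith [norm_nonneg q]

lemma qpP_ne {q : ℂ} (hq : ‖q‖ < 1) (n : ℕ) : qp q q n ≠ 0 := qp_ne q q hq hq.le n

lemma qpQ_ne {q : ℂ} (hq : ‖q‖ < 1) (n : ℕ) : qp (q^2) (q^2) n ≠ 0 :=
  qp_ne _ _ (hq2 hq) (hq2 hq).le n

lemma qpE_ne {q : ℂ} (hq : ‖q‖ < 1) (n : ℕ) : qp (-q) q n ≠ 0 := by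
  refine qp_ne _ _ ?_ hq.le n
  simpa using hq

lemma one_sub_pow_ne {q : ℂ} (hq : ‖q‖ < 1) (n : ℕ) : (1 : ℂ) - q * q ^ n ≠ 0 := by
  refine one_sub_ne _ ?_
  rw [norm_mul, norm_pow]
  have : ‖q‖ ^ n ≤ 1 := pow_le_one₀ (norm_nonneg q) hq.le
  nlinarith [norm_nonneg q]

lemma one_sub_pow_ne' {q : ℂ} (hq : ‖q‖ < 1) (n : ℕ) : (1 : ℂ) - q ^ 2 * (q ^ 2) ^ n ≠ 0 :=
  one_sub_pow_ne (hq2 hq) n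

lemma QPE (q : ℂ) (n : ℕ) : qp (q^2) (q^2) n = qp q q n * qp (-q) q n := by
  rw [qp, qp, qp, ← Finset.prod_mul_distrib]
  refine Finset.prod_congr rfl fun j _ => ?_
  have h : (q^2) ^ j = q ^ j * q ^ j := by
    rw [← pow_mul, two_mul, pow_add]
  rw [h]
  ring

lemma algD (q Qt Pi Pj : ℂ) (t i j : ℕ)
    (h1 : Pi ≠ 0) (h2 : Pj ≠ 0) (h3 : Qt ≠ 0)
    (h4 : 1 - q * q ^ i ≠ 0) (h5 : 1 - q * q ^ j ≠ 0)
    (h6 : 1 - q ^ 2 * (q ^ 2) ^ t ≠ 0) :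
    (1 - q ^ (2 * (t + j + 1))) *
        ((-1) ^ t * q ^ (t ^ 2) / (Qt * (Pi * (1 - q * q ^ i) * (Pj * (1 - q * q ^ j))))) -
      (1 + q ^ (t + 1 + i + (t + j) + 1)) *
        ((-1) ^ t * q ^ (t ^ 2) / (Qt * (Pi * (1 - q * q ^ i) * Pj)))
    = q ^ (j + 1) * (1 - q ^ (2 * t)) *
        ((-1) ^ t * q ^ (t ^ 2) / (Qt * (Pi * (1 - q * q ^ i) * (Pj * (1 - q * q ^ j))))) -
      q ^ j * (1 - q ^ (2 * (t + 1))) *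
        ((-1) ^ (t + 1) * q ^ (t ^ 2 + (2 * t + 1)) /
          (Qt * (1 - q ^ 2 * (q ^ 2) ^ t) * (Pi * Pj))) := by
  have hD1 : Qt * (Pi * (1 - q * q ^ i) * (Pj * (1 - q * q ^ j))) ≠ 0 := by
    apply_rules [mul_ne_zero]
  have hD2 : Qt * (Pi * (1 - q * q ^ i) * Pj) ≠ 0 := by apply_rules [mul_ne_zero]
  have hD4 : Qt * (1 - q ^ 2 * (q ^ 2) ^ t) * (Pi * Pj) ≠ 0 := by apply_rules [mul_ne_zero]
  simp only [← mul_div_assoc]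
  rw [div_sub_div _ _ hD1 hD2, div_sub_div _ _ hD1 hD4,
    div_eq_div_iff (mul_ne_zero hD1 hD2) (mul_ne_zero hD1 hD4)]
  rw [show t ^ 2 + (2 * t + 1) = (2 * t + 1) + t ^ 2 from by ring, pow_add]
  ring

lemma TT_rec (q : ℂ) (hq : ‖q‖ < 1) (k m t : ℕ) (ht : t ≤ m + 1) :
    (1 - q ^ (2 * (m + 1))) * TT q k (m + 1) t - (1 + q ^ (k + m + 1)) * TT q k m t
      = mu q (m + 1) t * TT q k (m + 1) t - mu q (m + 1) (t + 1) * TT q k (m + 1) (t + 1) := by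
  by_cases hk : t ≤ k
  · by_cases hm : t ≤ m
    · rcases Nat.lt_or_ge t k with hlt | hge
      · -- main case : t < k, t ≤ m
        obtain ⟨i, hi⟩ : ∃ i, k = t + 1 + i := ⟨k - (t+1), by omega⟩
        obtain ⟨j, hj⟩ : ∃ j, m = t + j := ⟨m - t, by omega⟩
        subst hi hj
        simp only [TT, mu]
        rw [if_pos (by omega : t ≤ t+1+i ∧ t ≤ t+j+1), if_pos (by omega : t ≤ t+1+i ∧ t ≤ t+j),
          if_pos (by omega : t+1 ≤ t+1+i ∧ t+1 ≤ t+j+1)]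
        simp only [show t + 1 + i - t = i + 1 from by omega,
          show t + j - t = j from by omega, show t + j + 1 - t = j + 1 from by omega,
          show t + 1 + i - (t + 1) = i from by omega,
          show t + j + 1 - (t + 1) = j from by omega]
        rw [qp_succ q q i, qp_succ q q j, qp_succ (q^2) (q^2) t]
        rw [show (t + 1) ^ 2 = t ^ 2 + (2 * t + 1) from by ring]
        have h1 : qp q q i ≠ 0 := qpP_ne hq i
        have h2 : qp q q j ≠ 0 := qpP_ne hq j
        have h3 : qp (q^2) (q^2) t ≠ 0 := qpQ_ne hq t
        have h4 : (1 : ℂ) - q * q ^ i ≠ 0 := one_sub_pow_ne hq i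
        have h5 : (1 : ℂ) - q * q ^ j ≠ 0 := one_sub_pow_ne hq j
        have h6 : (1 : ℂ) - q ^ 2 * (q ^ 2) ^ t ≠ 0 := one_sub_pow_ne' hq t
        exact algD q _ _ _ t i j h1 h2 h3 h4 h5 h6
      · -- t = k, t ≤ m
        have hk' : t = k := by omega
        subst hk'
        obtain ⟨j, hj⟩ : ∃ j, m = t + j := ⟨m - t, by omega⟩
        subst hj
        simp only [TT, mu]
        rw [if_pos (by omega : t ≤ t ∧ t ≤ t+j+1), if_pos (by omega : t ≤ t ∧ t ≤ t+j),
          if_neg (by omega : ¬(t+1 ≤ t ∧ t+1 ≤ t+j+1))]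
        simp only [show t - t = 0 from by omega, show t + j - t = j from by omega,
          show t + j + 1 - t = j + 1 from by omega]
        rw [qp_succ q q j]
        have h0 : qp q q 0 = 1 := by simp [qp]
        rw [h0]
        have h2 : qp q q j ≠ 0 := qpP_ne hq j
        have h3 : qp (q^2) (q^2) t ≠ 0 := qpQ_ne hq t
        have h5 : (1 : ℂ) - q * q ^ j ≠ 0 := one_sub_pow_ne hq j
        field_simp
        ring
    · -- t = m + 1 ≤ k
      have ht' : t = m + 1 := by omega
      subst ht'
      simp only [TT, mu]
      rw [if_pos (by omega : m+1 ≤ k ∧ m+1 ≤ m+1), if_neg (by omega : ¬(m+1 ≤ k ∧ m+1 ≤ m)),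
        if_neg (by omega : ¬(m+1+1 ≤ k ∧ m+1+1 ≤ m+1))]
      simp only [Nat.sub_self, pow_zero, one_mul, mul_zero, sub_zero]
  · -- t > k : everything vanishes
    simp only [TT]
    rw [if_neg (by omega : ¬(t ≤ k ∧ t ≤ m+1)), if_neg (by omega : ¬(t ≤ k ∧ t ≤ m)),
      if_neg (by omega : ¬(t+1 ≤ k ∧ t+1 ≤ m+1))]
    ring

lemma key_rec (q : ℂ) (hq : ‖q‖ < 1) (k m : ℕ) :
    (1 - q ^ (2 * (m + 1))) * ∑ t ∈ Finset.range (m + 2), TT q k (m + 1) t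
      = (1 + q ^ (k + m + 1)) * ∑ t ∈ Finset.range (m + 2), TT q k m t := by
  have h4 : ∑ t ∈ Finset.range (m + 2),
      ((1 - q ^ (2 * (m + 1))) * TT q k (m + 1) t - (1 + q ^ (k + m + 1)) * TT q k m t)
      = ∑ t ∈ Finset.range (m + 2),
      (mu q (m + 1) t * TT q k (m + 1) t - mu q (m + 1) (t + 1) * TT q k (m + 1) (t + 1)) :=
    Finset.sum_congr rfl fun t ht => TT_rec q hq k m t (by
      have := Finset.mem_range.1 ht; omega)
  rw [Finset.sum_range_sub' (fun t => mu q (m + 1) t * TT q k (m + 1) t) (m + 2)] at h4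
  have h5 : mu q (m + 1) 0 = 0 := by simp [mu]
  have h6 : TT q k (m + 1) (m + 2) = 0 := by
    simp only [TT]
    rw [if_neg (by omega : ¬(m+2 ≤ k ∧ m+2 ≤ m+1))]
  rw [h5, h6] at h4
  simp only [zero_mul, mul_zero, sub_zero] at h4
  rw [Finset.sum_sub_distrib, ← Finset.mul_sum, ← Finset.mul_sum] at h4
  linear_combination h4

lemma key (q : ℂ) (hq : ‖q‖ < 1) (k m : ℕ) :
    ∑ t ∈ Finset.range (m + 1), TT q k m t
      = qp (-q) q (k + m) / (qp (q^2) (q^2) k * qp (q^2) (q^2) m) := by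
  induction m with
  | zero =>
    rw [Finset.sum_range_one]
    simp only [TT]
    rw [if_pos (by omega : 0 ≤ k ∧ 0 ≤ 0)]
    have h0 : qp q q 0 = 1 := by simp [qp]
    have h1 : qp (q^2) (q^2) 0 = 1 := by simp [qp]
    rw [Nat.sub_zero, Nat.sub_self, h0, h1, QPE]
    have h2 : qp q q k ≠ 0 := qpP_ne hq k
    have h3 : qp (-q) q k ≠ 0 := qpE_ne hq k
    simp only [pow_zero, one_mul, mul_one, Nat.add_zero]
    field_simp
    simp
  | succ m ih =>
    have hrec := key_rec q hq k m
    have hlast : TT q k m (m + 1) = 0 := by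
      simp only [TT]
      rw [if_neg (by omega : ¬(m+1 ≤ k ∧ m+1 ≤ m))]
    have hext : ∑ t ∈ Finset.range (m + 2), TT q k m t
        = ∑ t ∈ Finset.range (m + 1), TT q k m t := by
      rw [Finset.sum_range_succ, hlast, add_zero]
    rw [hext, ih] at hrec
    have hne : (1 : ℂ) - q ^ (2 * (m + 1)) ≠ 0 := by
      refine one_sub_ne _ ?_
      rw [norm_pow]
      exact pow_lt_one₀ (norm_nonneg q) hq (by omega)
    have hQk : qp (q^2) (q^2) k ≠ 0 := qpQ_ne hq k
    have hQm : qp (q^2) (q^2) m ≠ 0 := qpQ_ne hq m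
    have hQm1 : qp (q^2) (q^2) (m + 1) ≠ 0 := qpQ_ne hq (m + 1)
    suffices h : (1 - q ^ (2 * (m + 1))) *
        (qp (-q) q (k + (m + 1)) / (qp (q^2) (q^2) k * qp (q^2) (q^2) (m + 1)))
        = (1 + q ^ (k + m + 1)) *
          (qp (-q) q (k + m) / (qp (q^2) (q^2) k * qp (q^2) (q^2) m)) by
      exact mul_left_cancel₀ hne (hrec.trans h.symm)
    have e1 : qp (-q) q (k + (m + 1)) = qp (-q) q (k + m) * (1 - (-q) * q ^ (k + m)) := by
      rw [show k + (m + 1) = (k + m) + 1 from by omega, qp_succ]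
    have e2 : qp (q^2) (q^2) (m + 1) = qp (q^2) (q^2) m * (1 - q^2 * (q^2) ^ m) := qp_succ _ _ _
    rw [e1, e2]
    have h6 : (1 : ℂ) - q ^ 2 * (q ^ 2) ^ m ≠ 0 := one_sub_pow_ne' hq m
    field_simp
    ring

end Stmt8

namespace Stmt8

lemma tsum_prod_eq_antidiagonal (F : ℕ × ℕ → ℂ) (h : Summable F) :
    ∑' p : ℕ × ℕ, F p = ∑' n : ℕ, ∑ kl ∈ Finset.HasAntidiagonal.antidiagonal n, F kl := by
  conv_rhs => congr; ext; rw [← Finset.sum_finset_coe, ← tsum_fintype (L := SummationFilter.unconditional _)]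
  rw [← Finset.HasAntidiagonal.sigmaAntidiagonalEquivProd.tsum_eq F]
  exact Summable.tsum_sigma' (fun n => (hasSum_fintype _).summable)
    (Finset.HasAntidiagonal.sigmaAntidiagonalEquivProd.summable_iff.mpr h)

lemma two_choose_two (t : ℕ) : 2 * t.choose 2 + t = t ^ 2 := by
  induction t with
  | zero => simp
  | succ t ih =>
    have h1 : (t + 1).choose 2 = t.choose 1 + t.choose 2 := Nat.choose_succ_succ t 1
    rw [Nat.choose_one_right] at h1
    have h2 : (t + 1) ^ 2 = t ^ 2 + 2 * t + 1 := by ring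
    omega

lemma powchoose (q : ℂ) (t : ℕ) : (q ^ 2) ^ (t.choose 2) * q ^ t = q ^ (t ^ 2) := by
  rw [← pow_mul, ← pow_add, ← two_choose_two t]

noncomputable def coef (q a b : ℂ) (p : ℕ × ℕ) : ℂ :=
  a ^ p.1 * b ^ p.2 *
    (qp (-q) q (p.1 + p.2) / (qp (q^2) (q^2) p.1 * qp (q^2) (q^2) p.2))

lemma summable_norm_coef (q a b : ℂ) (hq : ‖q‖ < 1) (ha : ‖a‖ < 1) (hb : ‖b‖ < 1) :
    Summable fun p : ℕ × ℕ => ‖coef q a b p‖ := by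
  obtain ⟨C, hC, hCle⟩ := qp_ub (-q) q hq
  obtain ⟨c, hc, hcle⟩ := qp_lb (q^2) (q^2) (hq2 hq) (hq2 hq)
  have hgeo : Summable fun p : ℕ × ℕ => ‖a‖ ^ p.1 * ‖b‖ ^ p.2 :=
    (summable_geometric_of_lt_one (norm_nonneg a) ha).mul_of_nonneg
      (summable_geometric_of_lt_one (norm_nonneg b) hb)
      (fun n => pow_nonneg (norm_nonneg a) n) (fun n => pow_nonneg (norm_nonneg b) n)
  refine Summable.of_nonneg_of_le (fun p => norm_nonneg _) (fun p => ?_)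
    (hgeo.mul_left (C * (c⁻¹ * c⁻¹)))
  rcases p with ⟨k, m⟩
  rw [coef]
  simp only [norm_mul, norm_div, norm_pow]
  have h1 : ‖qp (-q) q (k + m)‖ / (‖qp (q^2) (q^2) k‖ * ‖qp (q^2) (q^2) m‖)
      ≤ C * (c⁻¹ * c⁻¹) := by
    rw [div_eq_mul_inv, mul_inv]
    have e1 : ‖qp (q^2) (q^2) k‖⁻¹ ≤ c⁻¹ := inv_anti₀ hc (hcle k)
    have e2 : ‖qp (q^2) (q^2) m‖⁻¹ ≤ c⁻¹ := inv_anti₀ hc (hcle m)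
    have p1 : (0:ℝ) ≤ ‖qp (q^2) (q^2) k‖⁻¹ := inv_nonneg.2 (norm_nonneg _)
    have p2 : (0:ℝ) ≤ ‖qp (q^2) (q^2) m‖⁻¹ := inv_nonneg.2 (norm_nonneg _)
    have hC0 := hCle (k + m)
    have : ‖qp (q^2) (q^2) k‖⁻¹ * ‖qp (q^2) (q^2) m‖⁻¹ ≤ c⁻¹ * c⁻¹ := by
      nlinarith
    nlinarith [norm_nonneg (qp (-q) q (k+m)), mul_nonneg p1 p2]
  have h2 : (0:ℝ) ≤ ‖a‖ ^ k * ‖b‖ ^ m := by positivity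
  calc ‖a‖ ^ k * ‖b‖ ^ m * (‖qp (-q) q (k + m)‖ / (‖qp (q^2) (q^2) k‖ * ‖qp (q^2) (q^2) m‖))
      ≤ ‖a‖ ^ k * ‖b‖ ^ m * (C * (c⁻¹ * c⁻¹)) := by
        exact mul_le_mul_of_nonneg_left h1 h2
    _ = C * (c⁻¹ * c⁻¹) * (‖a‖ ^ k * ‖b‖ ^ m) := by ring

lemma coef_eq_u (q a b : ℂ) (hq : ‖q‖ < 1) (k m : ℕ) :
    coef q a b (k, m)
      = (qp (q^2) (q^2) (k + m) / (qp (q^2) (q^2) k * qp (q^2) (q^2) ((k + m) - k)))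
        * a ^ k * b ^ ((k + m) - k) / qp q q (k + m) := by
  rw [coef, Nat.add_sub_cancel_left, QPE q (k + m)]
  have h1 : qp q q (k + m) ≠ 0 := qpP_ne hq _
  have h2 : qp (q^2) (q^2) k ≠ 0 := qpQ_ne hq k
  have h3 : qp (q^2) (q^2) m ≠ 0 := qpQ_ne hq m
  field_simp

lemma lhs_eq (q a b : ℂ) (hq : ‖q‖ < 1) (ha : ‖a‖ < 1) (hb : ‖b‖ < 1) :
    ∑' n : ℕ, RS a b (q ^ 2) n / qp q q n = ∑' p : ℕ × ℕ, coef q a b p := by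
  have hsum : Summable (coef q a b) := (summable_norm_coef q a b hq ha hb).of_norm
  rw [tsum_prod_eq_antidiagonal _ hsum]
  refine tsum_congr fun n => ?_
  rw [Finset.Nat.sum_antidiagonal_eq_sum_range_succ (fun k l => coef q a b (k, l)) n]
  rw [RS]
  simp only [qbinom]
  rw [Finset.sum_div]
  refine Finset.sum_congr rfl fun k hk => ?_
  have hkn : k ≤ n := by
    have := Finset.mem_range.1 hk; omega
  have h := coef_eq_u q a b hq k (n - k)
  rw [show k + (n - k) = n from by omega] at h
  rw [h]

end Stmt8

namespace Stmt8

noncomputable def gser (q a b : ℂ) (n : ℕ) : ℂ :=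
  (-1) ^ n * (q^2) ^ (n.choose 2) * (a * b * q) ^ n / qp (q^2) (q^2) n

noncomputable def fsrc (q a b : ℂ) (z : ℕ × (ℕ × ℕ)) : ℂ :=
  gser q a b z.1 * (a ^ z.2.1 / qp q q z.2.1 * (b ^ z.2.2 / qp q q z.2.2))

noncomputable def wtgt (q a b : ℂ) (y : (ℕ × ℕ) × ℕ) : ℂ :=
  if y.2 ≤ y.1.1 ∧ y.2 ≤ y.1.2 then
    gser q a b y.2 *
      (a ^ (y.1.1 - y.2) / qp q q (y.1.1 - y.2) * (b ^ (y.1.2 - y.2) / qp q q (y.1.2 - y.2)))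
  else 0

def Jmap (z : ℕ × (ℕ × ℕ)) : (ℕ × ℕ) × ℕ := ((z.2.1 + z.1, z.2.2 + z.1), z.1)

lemma Jmap_inj : Function.Injective Jmap := by
  rintro ⟨t, r, s⟩ ⟨t', r', s'⟩ h
  simp only [Jmap, Prod.mk.injEq] at h
  obtain ⟨⟨h1, h2⟩, h3⟩ := h
  subst h3
  have e1 : r = r' := by omega
  have e2 : s = s' := by omega
  subst e1
  subst e2
  rfl

lemma wtgt_Jmap (q a b : ℂ) (z : ℕ × (ℕ × ℕ)) : wtgt q a b (Jmap z) = fsrc q a b z := by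
  rcases z with ⟨t, r, s⟩
  rw [wtgt, Jmap]
  simp only [Nat.add_sub_cancel]
  rw [if_pos ⟨Nat.le_add_left t r, Nat.le_add_left t s⟩]
  rfl

lemma wtgt_zero_off_range (q a b : ℂ) (y : (ℕ × ℕ) × ℕ) (hy : y ∉ Set.range Jmap) :
    wtgt q a b y = 0 := by
  rcases y with ⟨⟨k, m⟩, t⟩
  by_cases h : t ≤ k ∧ t ≤ m
  · exfalso
    refine hy ⟨(t, (k - t, m - t)), ?_⟩
    have h1 : k - t + t = k := by omega
    have h2 : m - t + t = m := by omega
    simp [Jmap, h1, h2]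
  · rw [wtgt, if_neg h]

lemma term_eq (q a b : ℂ) (hq : ‖q‖ < 1) (k m t : ℕ) :
    wtgt q a b ((k, m), t) = a ^ k * b ^ m * TT q k m t := by
  by_cases h : t ≤ k ∧ t ≤ m
  · obtain ⟨i, hi⟩ : ∃ i, k = t + i := ⟨k - t, by omega⟩
    obtain ⟨j, hj⟩ : ∃ j, m = t + j := ⟨m - t, by omega⟩
    subst hi hj
    rw [wtgt, TT, if_pos h, if_pos h]
    simp only [Nat.add_sub_cancel_left]
    rw [gser, ← powchoose q t]
    have h1 : qp q q i ≠ 0 := qpP_ne hq i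
    have h2 : qp q q j ≠ 0 := qpP_ne hq j
    have h3 : qp (q^2) (q^2) t ≠ 0 := qpQ_ne hq t
    rw [pow_add a t i, pow_add b t j]
    field_simp
    ring
  · rw [wtgt, TT, if_neg h, if_neg h, mul_zero]

lemma inner_sum (q a b : ℂ) (hq : ‖q‖ < 1) (k m : ℕ) :
    ∑ t ∈ Finset.range (m + 1), a ^ k * b ^ m * TT q k m t = coef q a b (k, m) := by
  rw [← Finset.mul_sum, key q hq k m, coef]

lemma summable_norm_fab (q a b : ℂ) (hq : ‖q‖ < 1) (ha : ‖a‖ < 1) (hb : ‖b‖ < 1) :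
    Summable fun rs : ℕ × ℕ => ‖a ^ rs.1 / qp q q rs.1 * (b ^ rs.2 / qp q q rs.2)‖ := by
  have h := (summable_norm_euler1 q a hq ha).mul_of_nonneg (summable_norm_euler1 q b hq hb)
    (fun n => norm_nonneg _) (fun n => norm_nonneg _)
  exact h.congr fun p => (norm_mul _ _).symm

lemma rhs_eq (q a b : ℂ) (hq : ‖q‖ < 1) (ha : ‖a‖ < 1) (hb : ‖b‖ < 1) :
    qpinf (a * b * q) (q ^ 2) / (qpinf a q * qpinf b q) = ∑' p : ℕ × ℕ, coef q a b p := by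
  have hQ2 : ‖q ^ 2‖ < 1 := hq2 hq
  have habq : ‖a * b * q‖ < 1 := by
    rw [norm_mul, norm_mul]
    have h1 : ‖a‖ * ‖b‖ < 1 := by nlinarith [norm_nonneg a, norm_nonneg b]
    nlinarith [norm_nonneg q, mul_nonneg (norm_nonneg a) (norm_nonneg b)]
  have hg_norm : Summable fun n => ‖gser q a b n‖ := by
    simpa [gser] using summable_norm_euler2 (q^2) (a*b*q) hQ2 habq
  have hfa_norm := summable_norm_euler1 q a hq ha
  have hfb_norm := summable_norm_euler1 q b hq hb
  have hfab_norm := summable_norm_fab q a b hq ha hb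
  have hA := euler1' q a hq ha
  have hB := euler1' q b hq hb
  -- step 1 : RHS as product of three sums
  have s1 : qpinf (a * b * q) (q ^ 2) / (qpinf a q * qpinf b q)
      = (∑' n, gser q a b n) * ((∑' n, a ^ n / qp q q n) * (∑' n, b ^ n / qp q q n)) := by
    rw [hA.2, hB.2, div_eq_mul_inv, mul_inv, ← euler2 (q^2) (a*b*q) hQ2 habq]
    rfl
  -- step 2/3 : to triple sum
  have s2 : (∑' n, a ^ n / qp q q n) * (∑' n, b ^ n / qp q q n)
      = ∑' rs : ℕ × ℕ, a ^ rs.1 / qp q q rs.1 * (b ^ rs.2 / qp q q rs.2) :=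
    tsum_mul_tsum_of_summable_norm hfa_norm hfb_norm
  have s3 : (∑' n, gser q a b n) *
        (∑' rs : ℕ × ℕ, a ^ rs.1 / qp q q rs.1 * (b ^ rs.2 / qp q q rs.2))
      = ∑' z : ℕ × (ℕ × ℕ), fsrc q a b z :=
    tsum_mul_tsum_of_summable_norm hg_norm hfab_norm
  -- step 4 : reindex
  have hfsrc_sum : Summable (fsrc q a b) := by
    have := summable_mul_of_summable_norm (f := gser q a b)
      (g := fun rs : ℕ × ℕ => a ^ rs.1 / qp q q rs.1 * (b ^ rs.2 / qp q q rs.2)) hg_norm hfab_norm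
    exact this
  have hw_sum : Summable (wtgt q a b) := by
    refine (Function.Injective.summable_iff Jmap_inj (wtgt_zero_off_range q a b)).1 ?_
    have : (wtgt q a b) ∘ Jmap = fsrc q a b := funext (wtgt_Jmap q a b)
    rw [this]
    exact hfsrc_sum
  have s4 : ∑' z : ℕ × (ℕ × ℕ), fsrc q a b z = ∑' y : (ℕ × ℕ) × ℕ, wtgt q a b y := by
    refine (tsum_eq_tsum_of_ne_zero_bij (f := wtgt q a b) (g := fsrc q a b)
      (fun x => Jmap x.1) ?_ ?_ ?_).symm
    · intro x y hxy
      exact Subtype.ext (Jmap_inj hxy)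
    · intro y hy
      by_contra hyr
      refine hy ?_
      refine wtgt_zero_off_range q a b y fun ⟨z, hz⟩ => hyr ?_
      have hz' : fsrc q a b z ≠ 0 := by
        rw [← wtgt_Jmap q a b z, hz]
        exact hy
      exact ⟨⟨z, hz'⟩, hz⟩
    · intro x
      exact wtgt_Jmap q a b x.1
  -- step 5/6/7 : regroup
  have s5 : ∑' y : (ℕ × ℕ) × ℕ, wtgt q a b y = ∑' p : ℕ × ℕ, ∑' t : ℕ, wtgt q a b (p, t) :=
    Summable.tsum_prod hw_sum
  have s6 : ∀ p : ℕ × ℕ, ∑' t : ℕ, wtgt q a b (p, t) = coef q a b p := by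
    rintro ⟨k, m⟩
    have e1 : ∑' t : ℕ, wtgt q a b ((k, m), t) = ∑' t : ℕ, a ^ k * b ^ m * TT q k m t :=
      tsum_congr (term_eq q a b hq k m)
    rw [e1, tsum_eq_sum (s := Finset.range (m + 1)) (fun t ht => ?_), inner_sum q a b hq k m]
    have htm : ¬ (t ≤ k ∧ t ≤ m) := by
      simp only [Finset.mem_range, not_lt] at ht
      omega
    simp only [TT]
    rw [if_neg htm, mul_zero]
  rw [s1, s2, s3, s4, s5]
  exact tsum_congr s6

end Stmt8


theorem stmt8 (q a b : ℂ) (hq : ‖q‖ < 1)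
    (ha : ‖a‖ < 1) (hb : ‖b‖ < 1) :
    ∑' n : ℕ, RS a b (q ^ 2) n / qp q q n
      = qpinf (a * b * q) (q ^ 2) / (qpinf a q * qpinf b q) := by
  have hq' : ‖q‖ < 1 := by exact hq
  have ha' : ‖a‖ < 1 := by exact ha
  have hb' : ‖b‖ < 1 := by exact hb
  rw [Stmt8.lhs_eq q a b hq' ha' hb', Stmt8.rhs_eq q a b hq' ha' hb']
end
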